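/- arXiv:1608.05495 — 5 statements merged into one kernel-verified Lean document; each statement's English description precedes it below -/
import Mathlib

section
/- For any connected graph G, the fractional strong metric dimension of G is at least the matching number of the strong resolving graph of G: sdim_f(G) ≥ ν(G_SR). -/
open SimpleGraph

/-- `Sset G x y` is the set `S{x,y}` of vertices `z` such that `x` lies on some shortest
`y`–`z` path or `y` lies on some shortest `x`–`z` path in `G`. -/
def Sset {V : Type*} (G : SimpleGraph V) (x y : V) : Set V :=
  {z | (∃ p : G.Walk y z, p.length = G.dist y z ∧ x ∈ p.support) ∨
       (∃ p : G.Walk x z, p.length = G.dist x z ∧ y ∈ p.support)}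

/-- A strong resolving function of `G`: `g : V → [0,1]` with `g(S{x,y}) ≥ 1` for all
distinct vertices `x, y`. -/
def IsSRF {V : Type*} (G : SimpleGraph V) (g : V → ℝ) : Prop :=
  (∀ v, 0 ≤ g v ∧ g v ≤ 1) ∧ ∀ x y : V, x ≠ y → 1 ≤ ∑ᶠ z ∈ Sset G x y, g z

/-- The fractional strong metric dimension of `G`. -/
noncomputable def sdimf {V : Type*} (G : SimpleGraph V) : ℝ :=
  sInf {s : ℝ | ∃ g : V → ℝ, IsSRF G g ∧ s = ∑ᶠ v, g v}

/-- A strong resolving set of `G`: every pair of distinct vertices is strongly resolved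
by some vertex of `S` (i.e. some vertex of `S` lies in `S{x,y}`). -/
def IsSRSet {V : Type*} (G : SimpleGraph V) (S : Set V) : Prop :=
  ∀ x y : V, x ≠ y → ∃ z ∈ S, z ∈ Sset G x y

/-- The strong metric dimension of `G`: the minimum cardinality of a strong resolving set. -/
noncomputable def sdim {V : Type*} (G : SimpleGraph V) : ℕ :=
  sInf {n : ℕ | ∃ S : Set V, IsSRSet G S ∧ S.ncard = n}

/-- `u` is maximally distant from `v`: `d(u,v) ≥ d(w,v)` for every neighbor `w` of `u`. -/
def MaxDistFrom {V : Type*} (G : SimpleGraph V) (u v : V) : Prop :=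
  ∀ w : V, G.Adj u w → G.dist w v ≤ G.dist u v

/-- `u` and `v` are mutually maximally distant (MMD) in `G`. -/
def MMD {V : Type*} (G : SimpleGraph V) (u v : V) : Prop :=
  u ≠ v ∧ MaxDistFrom G u v ∧ MaxDistFrom G v u

/-- The strong resolving graph of `G` (on the ambient vertex set): `u ~ v` iff `u` MMD `v`. -/
def SRGraph {V : Type*} (G : SimpleGraph V) : SimpleGraph V where
  Adj := MMD G
  symm := ⟨fun _ _ h => ⟨h.1.symm, h.2.2, h.2.1⟩⟩
  loopless := ⟨fun _ h => h.1 rfl⟩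

/-- `M(G)`: the set of vertices that are mutually maximally distant with some vertex. -/
def Mset {V : Type*} (G : SimpleGraph V) : Set V := {x | ∃ y, MMD G x y}

/-- The matching number of `G`. -/
noncomputable def matchNum {V : Type*} (G : SimpleGraph V) : ℕ :=
  sSup {n : ℕ | ∃ M : G.Subgraph, M.IsMatching ∧ M.edgeSet.ncard = n}

/-- The corona product `G ⊙ H`. -/
def corona {V W : Type*} (G : SimpleGraph V) (H : SimpleGraph W) :
    SimpleGraph (V ⊕ V × W) where
  Adj x y :=
    match x, y with
    | Sum.inl u, Sum.inl u' => G.Adj u u'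
    | Sum.inl u, Sum.inr iw => u = iw.1
    | Sum.inr iw, Sum.inl u => iw.1 = u
    | Sum.inr iw, Sum.inr iw' => iw.1 = iw'.1 ∧ H.Adj iw.2 iw'.2
  symm := by
    constructor
    rintro (u | iw) (u' | iw') h
    · exact G.adj_symm h
    · exact h.symm
    · exact h.symm
    · exact ⟨h.1.symm, H.adj_symm h.2⟩
  loopless := by
    constructor
    rintro (u | iw) h
    · exact G.irrefl h
    · exact H.irrefl h.2

/-- `K₁ ⊙ H`: the graph obtained from `H` by adding one new vertex adjacent to every
vertex of `H`. -/
def cone {W : Type*} (H : SimpleGraph W) : SimpleGraph (Option W) where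
  Adj x y :=
    match x, y with
    | none, none => False
    | none, some _ => True
    | some _, none => True
    | some w, some w' => H.Adj w w'
  symm := by
    constructor
    rintro (_ | w) (_ | w') h
    · exact h
    · exact trivial
    · exact trivial
    · exact H.adj_symm h
  loopless := by
    constructor
    rintro (_ | w) h
    · exact h
    · exact H.irrefl h

/-- The lexicographic product `G[H]`. -/
def lexProd {V W : Type*} (G : SimpleGraph V) (H : SimpleGraph W) :
    SimpleGraph (V × W) where
  Adj x y := G.Adj x.1 y.1 ∨ (x.1 = y.1 ∧ H.Adj x.2 y.2)
  symm := by
    constructor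
    rintro x y (h | ⟨h1, h2⟩)
    · exact Or.inl (G.adj_symm h)
    · exact Or.inr ⟨h1.symm, H.adj_symm h2⟩
  loopless := by
    constructor
    rintro x (h | ⟨_, h2⟩)
    · exact G.irrefl h
    · exact H.irrefl h2

/-- `SL{x,y} = (N[x] ∪ N[y]) ∩ S{x,y}`. -/
def SLset {W : Type*} (H : SimpleGraph W) (x y : W) : Set W :=
  (insert x (H.neighborSet x) ∪ insert y (H.neighborSet y)) ∩ Sset H x y

/-- A strong locating function of `H`. -/
def IsSLF {W : Type*} (H : SimpleGraph W) (f : W → ℝ) : Prop :=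
  (∀ v, 0 ≤ f v ∧ f v ≤ 1) ∧ ∀ x y : W, x ≠ y → 1 ≤ ∑ᶠ z ∈ SLset H x y, f z

/-- `sl_f(H)`: the minimum weight of a strong locating function of `H`. -/
noncomputable def slf {W : Type*} (H : SimpleGraph W) : ℝ :=
  sInf {s : ℝ | ∃ f : W → ℝ, IsSLF H f ∧ s = ∑ᶠ v, f v}

/-- `u` has a true twin: some other vertex with the same closed neighborhood. -/
def HasTrueTwin {V : Type*} (G : SimpleGraph V) (u : V) : Prop :=
  ∃ v : V, v ≠ u ∧ insert v (G.neighborSet v) = insert u (G.neighborSet u)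

/-- `u` has a false twin: some other vertex with the same open neighborhood. -/
def HasFalseTwin {V : Type*} (G : SimpleGraph V) (u : V) : Prop :=
  ∃ v : V, v ≠ u ∧ G.neighborSet v = G.neighborSet u

/-- `m₁(G)`: number of vertices in type-1 (singleton) classes of the twin relation. -/
noncomputable def m1 {V : Type*} (G : SimpleGraph V) : ℕ :=
  {u : V | ¬ HasTrueTwin G u ∧ ¬ HasFalseTwin G u}.ncard

/-- `m₂(G)`: number of vertices in type-2 (clique) classes of the twin relation. -/
noncomputable def m2 {V : Type*} (G : SimpleGraph V) : ℕ :=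
  {u : V | HasTrueTwin G u}.ncard

/-- `m₃(G)`: number of vertices in type-3 (independent set) classes of the twin relation. -/
noncomputable def m3 {V : Type*} (G : SimpleGraph V) : ℕ :=
  {u : V | HasFalseTwin G u}.ncard

/-- The strong resolving graph of `G` (whose vertex set is `M(G)`) is Hamiltonian:
there is a cycle in `SRGraph G` passing through every vertex of `M(G)`. -/
def SRHamiltonian {V : Type*} (G : SimpleGraph V) : Prop :=
  ∃ (u : V) (p : (SRGraph G).Walk u u), p.IsCycle ∧ ∀ v ∈ Mset G, v ∈ p.support


section Aux

variable {V : Type*} {G : SimpleGraph V}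

/-- If `u` is maximally distant from `v` and lies on a shortest `v`–`z` walk, with
`u ≠ v`, then `z = u`. -/
lemma key_maxdist (hG : G.Connected) {u v z : V}
    (hmax : MaxDistFrom G u v) (p : G.Walk v z)
    (hlen : p.length = G.dist v z) (hu : u ∈ p.support) : z = u := by
  classical
  by_contra hz
  have hspec := p.take_spec hu
  have hlsum : (p.takeUntil u hu).length + (p.dropUntil u hu).length = p.length := by
    rw [← Walk.length_append, hspec]
  obtain ⟨w, hadj, r', hr'⟩ := Walk.exists_eq_cons_of_ne (fun h => hz h.symm) (p.dropUntil u hu)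
  have h1 : G.dist v u ≤ (p.takeUntil u hu).length := SimpleGraph.dist_le _
  have h2 : G.dist w z ≤ r'.length := SimpleGraph.dist_le r'
  have h3 : G.dist v z ≤ G.dist v w + G.dist w z := hG.dist_triangle
  have h4 : G.dist v w ≤ G.dist v u := by
    have := hmax w hadj
    rwa [SimpleGraph.dist_comm (u := w) (v := v), SimpleGraph.dist_comm (u := u) (v := v)] at this
  rw [hr', Walk.length_cons] at hlsum
  omega

lemma Sset_subset_pair (hG : G.Connected) {u v : V} (h : MMD G u v) :
    Sset G u v ⊆ {u, v} := by
  rintro z (⟨p, hp, hx⟩ | ⟨p, hp, hy⟩)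
  · exact Or.inl (key_maxdist hG h.2.1 p hp hx)
  · exact Or.inr (key_maxdist hG h.2.2 p hp hy)

lemma mem_Sset_left (hG : G.Connected) (x y : V) : x ∈ Sset G x y := by
  obtain ⟨p, hp⟩ := hG.exists_walk_length_eq_dist y x
  exact Or.inl ⟨p, hp, p.end_mem_support⟩

lemma srf_pair [Fintype V] (hG : G.Connected) {g : V → ℝ} (hg : IsSRF G g)
    {u v : V} (h : MMD G u v) : 1 ≤ g u + g v := by
  classical
  have h1 := hg.2 u v h.1
  calc (1 : ℝ) ≤ ∑ᶠ z ∈ Sset G u v, g z := h1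
    _ = ∑ z ∈ (Sset G u v).toFinite.toFinset, g z :=
        finsum_mem_eq_finite_toFinset_sum _ _
    _ ≤ ∑ z ∈ ({u, v} : Finset V), g z := by
        apply Finset.sum_le_sum_of_subset_of_nonneg
        · intro z hz
          have := Sset_subset_pair hG h ((Set.Finite.mem_toFinset _).mp hz)
          simpa using this
        · intro z _ _; exact (hg.1 z).1
    _ = g u + g v := Finset.sum_pair h.1

lemma matching_le_sum [Fintype V] (hG : G.Connected) {g : V → ℝ} (hg : IsSRF G g)
    (M : (SRGraph G).Subgraph) (hM : M.IsMatching) :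
    (M.edgeSet.ncard : ℝ) ≤ ∑ᶠ v, g v := by
  classical
  set F : Sym2 V → Finset V :=
    Sym2.lift ⟨fun a b => {a, b}, fun a b => Finset.pair_comm a b⟩ with hF
  have hFmem : ∀ (e : Sym2 V) (x : V), x ∈ F e ↔ x ∈ e := by
    intro e x
    induction e using Sym2.inductionOn with
    | hf a b => simp [hF, Sym2.mem_iff]
  set E : Finset (Sym2 V) := M.edgeSet.toFinite.toFinset with hE
  have hdisj : ∀ e₁ ∈ E, ∀ e₂ ∈ E, e₁ ≠ e₂ → Disjoint (F e₁) (F e₂) := by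
    intro e₁ he₁ e₂ he₂ hne
    rw [Finset.disjoint_left]
    intro x hx1 hx2
    apply hne
    rw [Set.Finite.mem_toFinset] at he₁ he₂
    obtain ⟨a, rfl⟩ := Sym2.mem_iff_exists.mp ((hFmem _ _).mp hx1)
    obtain ⟨b, rfl⟩ := Sym2.mem_iff_exists.mp ((hFmem _ _).mp hx2)
    have ha : M.Adj x a := SimpleGraph.Subgraph.mem_edgeSet.mp he₁
    have hb : M.Adj x b := SimpleGraph.Subgraph.mem_edgeSet.mp he₂
    obtain ⟨w, -, huniq⟩ := hM (M.edge_vert ha)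
    rw [huniq a ha, huniq b hb]
  have hcount : (M.edgeSet.ncard : ℝ) = E.card := by
    have := Set.ncard_eq_toFinset_card _ M.edgeSet.toFinite
    exact_mod_cast congrArg Nat.cast this
  calc (M.edgeSet.ncard : ℝ) = E.card := hcount
    _ = ∑ _e ∈ E, (1 : ℝ) := by simp
    _ ≤ ∑ e ∈ E, ∑ x ∈ F e, g x := by
        apply Finset.sum_le_sum
        intro e he
        rw [Set.Finite.mem_toFinset] at he
        induction e using Sym2.inductionOn with
        | hf a b =>
          have hadj : MMD G a b := M.adj_sub (SimpleGraph.Subgraph.mem_edgeSet.mp he)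
          have hne : a ≠ b := hadj.1
          have : F s(a, b) = {a, b} := rfl
          rw [this, Finset.sum_pair hne]
          exact srf_pair hG hg hadj
    _ = ∑ x ∈ E.biUnion F, g x := (Finset.sum_biUnion hdisj).symm
    _ ≤ ∑ x, g x := by
        apply Finset.sum_le_sum_of_subset_of_nonneg (Finset.subset_univ _)
        intro x _ _; exact (hg.1 x).1
    _ = ∑ᶠ v, g v := (finsum_eq_sum_of_fintype g).symm

end Aux

/-- For any connected graph `G`,
`sdim_f(G) ≥ ν(G_SR)`. -/
theorem sdimf_ge_matchNum_SRGraph {V : Type*} [Fintype V] (G : SimpleGraph V)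
    (hG : G.Connected) :
    (matchNum (SRGraph G) : ℝ) ≤ sdimf G := by
  classical
  have hSRFne : ∃ s, s ∈ {s : ℝ | ∃ g : V → ℝ, IsSRF G g ∧ s = ∑ᶠ v, g v} := by
    refine ⟨_, fun _ => 1, ⟨fun v => by norm_num, ?_⟩, rfl⟩
    intro x y hxy
    rw [finsum_mem_eq_finite_toFinset_sum _ (Set.toFinite _)]
    have hx : x ∈ (Sset G x y).toFinite.toFinset :=
      (Set.Finite.mem_toFinset _).mpr (mem_Sset_left hG x y)
    exact Finset.single_le_sum (f := fun _ : V => (1 : ℝ)) (fun i _ => by norm_num) hx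
  -- obtain an optimal matching
  have hbdd : BddAbove {n : ℕ | ∃ M : (SRGraph G).Subgraph,
      M.IsMatching ∧ M.edgeSet.ncard = n} := by
    refine ⟨Fintype.card (Sym2 V), ?_⟩
    rintro n ⟨M, -, rfl⟩
    calc M.edgeSet.ncard ≤ (Set.univ : Set (Sym2 V)).ncard :=
          Set.ncard_le_ncard (Set.subset_univ _) Set.finite_univ
      _ = Fintype.card (Sym2 V) := by rw [Set.ncard_univ, Nat.card_eq_fintype_card]
  have hne : (0 : ℕ) ∈ {n : ℕ | ∃ M : (SRGraph G).Subgraph,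
      M.IsMatching ∧ M.edgeSet.ncard = n} := by
    refine ⟨⊥, ?_, ?_⟩
    · intro v hv
      simp [SimpleGraph.Subgraph.verts_bot] at hv
    · simp [SimpleGraph.Subgraph.edgeSet_bot]
  obtain ⟨M, hMmatch, hMcard⟩ := Nat.sSup_mem ⟨0, hne⟩ hbdd
  rw [matchNum] at *
  apply le_csInf hSRFne
  rintro s ⟨g, hg, rfl⟩
  rw [← hMcard]
  exact matching_le_sum hG hg M hMmatch
end

section
/- Let G be a connected graph. If the strong resolving graph G_SR contains a regular graph as a subgraph with the same vertex set V(G_SR) (i.e., a spanning regular subgraph of degree at least 1), then sdim_f(G) = |M(G)|/2. -/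
open SimpleGraph

section AuxSdimf

variable {V : Type*}

private lemma distSplit {G : SimpleGraph V} (hG : G.Connected) {a b c : V}
    (p : G.Walk a c) (q : G.Walk c b) (h : p.length + q.length = G.dist a b) :
    p.length = G.dist a c ∧ q.length = G.dist c b := by
  have h1 := SimpleGraph.dist_le p
  have h2 := SimpleGraph.dist_le q
  have h3 := hG.dist_triangle (u := a) (v := c) (w := b)
  omega

private lemma extendAux {G : SimpleGraph V} [Fintype V] (hG : G.Connected) :
    ∀ (n : ℕ) (y u : V) (p : G.Walk y u), p.length = G.dist y u →
      Fintype.card V ≤ n + G.dist y u →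
      ∃ (u' : V) (ext : G.Walk u u'),
        (p.append ext).length = G.dist y u' ∧ MaxDistFrom G u' y := by
  intro n
  induction n with
  | zero =>
    intro y u p hp hn
    have hpath : p.IsPath := p.isPath_of_length_eq_dist hp
    have := hpath.length_lt
    omega
  | succ n ih =>
    intro y u p hp hn
    by_cases hmax : MaxDistFrom G u y
    · exact ⟨u, SimpleGraph.Walk.nil, by simpa using hp, hmax⟩
    · simp only [MaxDistFrom, not_forall] at hmax
      obtain ⟨w, hadj, hlt⟩ := hmax
      have hlt' : G.dist u y < G.dist w y := lt_of_not_ge hlt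
      have hadj1 : G.dist u w = 1 := SimpleGraph.dist_eq_one_iff_adj.mpr hadj
      have htri : G.dist y w ≤ G.dist y u + G.dist u w :=
        hG.dist_triangle (u := y) (v := u) (w := w)
      have hcy : G.dist y u = G.dist u y := G.dist_comm
      have hcw : G.dist y w = G.dist w y := G.dist_comm
      have hr : G.dist y w = G.dist y u + 1 := by omega
      have hq : (p.concat hadj).length = G.dist y w := by
        rw [SimpleGraph.Walk.length_concat, hp, hr]
      obtain ⟨u', ext, hlen, hmax'⟩ := ih y w (p.concat hadj) hq (by omega)
      refine ⟨u', SimpleGraph.Walk.cons hadj ext, ?_, hmax'⟩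
      have : ((p.concat hadj).append ext).length = G.dist y u' := hlen
      simp only [SimpleGraph.Walk.length_append, SimpleGraph.Walk.length_concat,
        SimpleGraph.Walk.length_cons] at this ⊢
      omega

private lemma existsMMDpair {G : SimpleGraph V} [Fintype V] (hG : G.Connected)
    {x y : V} (hxy : x ≠ y) :
    ∃ u v : V, MMD G u v ∧ u ∈ Sset G x y ∧ v ∈ Sset G x y := by
  classical
  obtain ⟨p₁, hp₁⟩ := (hG y x).exists_walk_length_eq_dist
  obtain ⟨u, e₁, hq, hu⟩ := extendAux hG (Fintype.card V) y x p₁ hp₁ (by omega)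
  set q : G.Walk y u := p₁.append e₁ with hqdef
  have hxq : x ∈ q.support := by
    rw [hqdef, SimpleGraph.Walk.mem_support_append_iff]
    exact Or.inl p₁.end_mem_support
  have hqrev : q.reverse.length = G.dist u y := by
    rw [SimpleGraph.Walk.length_reverse, hq, G.dist_comm]
  obtain ⟨v, e₂, hs, hv⟩ := extendAux hG (Fintype.card V) u y q.reverse hqrev (by omega)
  set s : G.Walk u v := q.reverse.append e₂ with hsdef
  -- length facts
  have hsplit : q.reverse.length = G.dist u y ∧ e₂.length = G.dist y v := by
    apply distSplit hG
    rw [← SimpleGraph.Walk.length_append, ← hsdef]; exact hs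
  have hsum : G.dist u v = G.dist u y + G.dist y v := by
    have := hs
    rw [hsdef] at *
    rw [SimpleGraph.Walk.length_append] at this
    omega
  -- u ≠ v
  have hxs : G.dist y x ≤ q.length := by
    have h1 := SimpleGraph.dist_le (q.takeUntil x hxq)
    have h2 := q.length_takeUntil_le hxq
    omega
  have huv : u ≠ v := by
    intro h
    subst h
    have h0 : G.dist u u = 0 := by simp
    have h1 : G.dist u y = 0 := by omega
    have h2 : u = y := hG.dist_eq_zero_iff.mp h1
    have h3 : q.length = 0 := by rw [hq, G.dist_comm]; exact h1
    have : G.dist y x = 0 := by omega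
    exact hxy (hG.dist_eq_zero_iff.mp this).symm
  -- MaxDistFrom u v
  have hu' : MaxDistFrom G u v := by
    intro w hadj
    have h1 : G.dist w y ≤ G.dist u y := hu w hadj
    have h2 : G.dist w v ≤ G.dist w y + G.dist y v := hG.dist_triangle
    omega
  refine ⟨u, v, ⟨huv, hu', hv⟩, Or.inl ⟨q, hq, hxq⟩, ?_⟩
  -- v ∈ Sset G x y : need shortest walk x → v containing y
  have hx' : x ∈ q.reverse.support := by
    rw [SimpleGraph.Walk.support_reverse, List.mem_reverse]; exact hxq
  set t := q.reverse.takeUntil x hx' with htdef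
  set d := q.reverse.dropUntil x hx' with hddef
  have hspec : t.append d = q.reverse := q.reverse.take_spec hx'
  have hw : s = t.append (d.append e₂) := by
    rw [hsdef, ← hspec, SimpleGraph.Walk.append_assoc]
  have hlen2 : t.length + (d.append e₂).length = G.dist u v := by
    rw [← SimpleGraph.Walk.length_append, ← hw]; exact hs
  have hfin := (distSplit hG t (d.append e₂) hlen2).2
  refine Or.inr ⟨d.append e₂, hfin, ?_⟩
  rw [SimpleGraph.Walk.mem_support_append_iff]
  exact Or.inl d.end_mem_support

private lemma SsetMMD {G : SimpleGraph V} (hG : G.Connected) {u v : V} (h : MMD G u v) :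
    Sset G u v = {u, v} := by
  classical
  obtain ⟨huv, hmu, hmv⟩ := h
  ext z
  constructor
  · rintro (⟨p, hp, hup⟩ | ⟨p, hp, hvp⟩)
    · -- p : G.Walk v z shortest with u on it; show z = u
      left
      by_contra hzu
      set t := p.takeUntil u hup with htdef
      set d := p.dropUntil u hup with hddef
      have hspec : t.append d = p := p.take_spec hup
      have hnil : ¬ d.Nil := SimpleGraph.Walk.not_nil_of_ne (fun h => hzu h.symm)
      obtain ⟨w, hadj, d', hd⟩ := SimpleGraph.Walk.not_nil_iff.mp hnil
      rw [hd] at hspec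
      · have hw : (t.concat hadj).append d' = p := by
          rw [SimpleGraph.Walk.concat_append]; exact hspec
        have hlen : (t.concat hadj).length + d'.length = G.dist v z := by
          rw [← SimpleGraph.Walk.length_append, hw]; exact hp
        have h1 := (distSplit hG (t.concat hadj) d' hlen).1
        have h2 := (distSplit hG t (SimpleGraph.Walk.cons hadj d')
          (by rw [← SimpleGraph.Walk.length_append, hspec]; exact hp)).1
        rw [SimpleGraph.Walk.length_concat] at h1
        have h3 : G.dist w v ≤ G.dist u v := hmu w hadj
        have c1 : G.dist v w = G.dist w v := G.dist_comm
        have c2 : G.dist v u = G.dist u v := G.dist_comm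
        omega
    · -- p : G.Walk u z shortest with v on it; show z = v
      right
      by_contra hzv
      set t := p.takeUntil v hvp with htdef
      set d := p.dropUntil v hvp with hddef
      have hspec : t.append d = p := p.take_spec hvp
      have hnil : ¬ d.Nil := SimpleGraph.Walk.not_nil_of_ne (fun h => hzv h.symm)
      obtain ⟨w, hadj, d', hd⟩ := SimpleGraph.Walk.not_nil_iff.mp hnil
      rw [hd] at hspec
      · have hw : (t.concat hadj).append d' = p := by
          rw [SimpleGraph.Walk.concat_append]; exact hspec
        have hlen : (t.concat hadj).length + d'.length = G.dist u z := by
          rw [← SimpleGraph.Walk.length_append, hw]; exact hp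
        have h1 := (distSplit hG (t.concat hadj) d' hlen).1
        have h2 := (distSplit hG t (SimpleGraph.Walk.cons hadj d')
          (by rw [← SimpleGraph.Walk.length_append, hspec]; exact hp)).1
        rw [SimpleGraph.Walk.length_concat] at h1
        have h3 : G.dist w u ≤ G.dist v u := hmv w hadj
        have c1 : G.dist u w = G.dist w u := G.dist_comm
        have c2 : G.dist u v = G.dist v u := G.dist_comm
        omega
  · rintro (rfl | rfl)
    · obtain ⟨p, hp⟩ := (hG v z).exists_walk_length_eq_dist
      exact Or.inl ⟨p, hp, p.end_mem_support⟩
    · obtain ⟨p, hp⟩ := (hG u z).exists_walk_length_eq_dist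
      exact Or.inr ⟨p, hp, p.end_mem_support⟩

private lemma MMD.symm' {G : SimpleGraph V} {u v : V} (h : MMD G u v) : MMD G v u :=
  ⟨h.1.symm, h.2.2, h.2.1⟩

end AuxSdimf

/-- If `G_SR` contains a spanning regular subgraph of degree `r ≥ 1`
(on the vertex set `V(G_SR) = M(G)`), then `sdim_f(G) = |M(G)|/2`. -/
theorem sdimf_eq_half_Mset_of_spanning_regular_subgraph {V : Type*} [Fintype V]
    (G : SimpleGraph V) (hG : G.Connected)
    (K : SimpleGraph V) (hKsub : K ≤ SRGraph G) (hKspan : K.support = Mset G)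
    (r : ℕ) (hr : 1 ≤ r) (hKreg : ∀ v ∈ Mset G, (K.neighborSet v).ncard = r) :
    sdimf G = ((Mset G).ncard : ℝ) / 2 := by
  classical
  set M := Mset G with hMdef
  set Mf : Finset V := M.toFinset with hMf
  have hMfcard : Mf.card = M.ncard := (Set.ncard_eq_toFinset_card' M).symm
  -- any SRF satisfies g u + g v ≥ 1 on MMD pairs
  have hpair : ∀ (g : V → ℝ), IsSRF G g → ∀ u v, MMD G u v → 1 ≤ g u + g v := by
    intro g hg u v h
    have h1 := hg.2 u v h.1
    rwa [SsetMMD hG h, finsum_mem_pair h.1] at h1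
  -- the candidate function: 1/2 on M, 0 elsewhere
  set g₀ : V → ℝ := fun v => if v ∈ M then 1/2 else 0 with hg₀
  have hg₀nonneg : ∀ v, 0 ≤ g₀ v := by
    intro v; by_cases h : v ∈ M <;> simp [hg₀, h]
  have hg₀SRF : IsSRF G g₀ := by
    constructor
    · intro v
      refine ⟨hg₀nonneg v, ?_⟩
      by_cases h : v ∈ M <;> simp [hg₀, h] <;> norm_num
    · intro x y hxy
      obtain ⟨u, v, hmmd, huS, hvS⟩ := existsMMDpair hG hxy
      have huM : u ∈ M := ⟨v, hmmd⟩
      have hvM : v ∈ M := ⟨u, hmmd.symm'⟩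
      have hfin : (Sset G x y).Finite := Set.toFinite _
      rw [finsum_mem_eq_finite_toFinset_sum _ hfin]
      have hsub : ({u, v} : Finset V) ⊆ hfin.toFinset := by
        intro z hz
        simp only [Finset.mem_insert, Finset.mem_singleton] at hz
        rcases hz with rfl | rfl
        · exact (Set.Finite.mem_toFinset hfin).mpr huS
        · exact (Set.Finite.mem_toFinset hfin).mpr hvS
      calc (1:ℝ) = ∑ z ∈ ({u, v} : Finset V), g₀ z := by
            rw [Finset.sum_pair hmmd.1]
            simp [hg₀, huM, hvM]
            norm_num
        _ ≤ _ := Finset.sum_le_sum_of_subset_of_nonneg hsub (fun i _ _ => hg₀nonneg i)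
  have hfilter : Finset.univ.filter (· ∈ M) = Mf := by
    ext v; simp [hMf, Set.mem_toFinset]
  have hg₀sum : ∑ᶠ v, g₀ v = (M.ncard : ℝ) / 2 := by
    rw [finsum_eq_sum_of_fintype]
    have : ∑ v, g₀ v = ∑ v ∈ Finset.univ.filter (· ∈ M), (1/2 : ℝ) := by
      rw [Finset.sum_filter]
    rw [this, hfilter, Finset.sum_const, nsmul_eq_mul, hMfcard]
    ring
  -- lower bound for any SRF
  have hlow : ∀ g : V → ℝ, IsSRF G g → (M.ncard : ℝ)/2 ≤ ∑ᶠ v, g v := by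
    intro g hg
    have hKadj : ∀ u v, K.Adj u v → 1 ≤ g u + g v := fun u v h => hpair g hg u v (hKsub h)
    have hdeg : ∀ v ∈ M, (K.neighborFinset v).card = r := by
      intro v hv
      rw [SimpleGraph.neighborFinset_def, ← Set.ncard_eq_toFinset_card']
      exact hKreg v hv
    have hdeg0 : ∀ v, v ∉ M → K.neighborFinset v = ∅ := by
      intro v hv
      ext w
      simp only [SimpleGraph.mem_neighborFinset, Finset.notMem_empty, iff_false]
      intro h
      exact hv (hKspan ▸ (K.mem_support.mpr ⟨w, h⟩))
    have hsymm : (∑ v, ∑ w ∈ K.neighborFinset v, g w)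
        = ∑ v, ∑ w ∈ K.neighborFinset v, g v := by
      exact Finset.sum_comm' (by
        intro a b
        simp only [Finset.mem_univ, true_and, and_true, SimpleGraph.mem_neighborFinset]
        exact K.adj_comm a b)
    have hS : (∑ v, ∑ w ∈ K.neighborFinset v, g v) = ∑ v ∈ Mf, (r : ℝ) * g v := by
      rw [← Finset.sum_subset (Finset.subset_univ Mf) (fun v _ hv => by
        rw [hdeg0 v (by simpa [hMf, Set.mem_toFinset] using hv)]
        simp)]
      refine Finset.sum_congr rfl (fun v hv => ?_)
      have hvM : v ∈ M := by simpa [hMf, Set.mem_toFinset] using hv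
      rw [Finset.sum_const, nsmul_eq_mul, hdeg v hvM]
    have hEq : (∑ v, ∑ w ∈ K.neighborFinset v, (g v + g w))
        = 2 * r * ∑ v ∈ Mf, g v := by
      have h1 : (∑ v, ∑ w ∈ K.neighborFinset v, (g v + g w))
          = (∑ v, ∑ w ∈ K.neighborFinset v, g v) + ∑ v, ∑ w ∈ K.neighborFinset v, g w := by
        simp only [Finset.sum_add_distrib]
      rw [h1, hsymm, hS, ← Finset.mul_sum]
      ring
    have hA : (r : ℝ) * M.ncard ≤ ∑ v, ∑ w ∈ K.neighborFinset v, (g v + g w) := by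
      have h2 : (r : ℝ) * M.ncard = ∑ v ∈ Mf, ((K.neighborFinset v).card : ℝ) := by
        rw [Finset.sum_congr rfl (fun v hv => by
          rw [hdeg v (by simpa [hMf, Set.mem_toFinset] using hv)])]
        rw [Finset.sum_const, nsmul_eq_mul, hMfcard]
        ring
      rw [h2, ← Finset.sum_subset (Finset.subset_univ Mf) (fun v _ hv => by
        rw [hdeg0 v (by simpa [hMf, Set.mem_toFinset] using hv)]
        simp)]
      refine Finset.sum_le_sum (fun v _ => ?_)
      calc ((K.neighborFinset v).card : ℝ) = ∑ w ∈ K.neighborFinset v, 1 := by simp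
        _ ≤ _ := Finset.sum_le_sum
            (fun w hw => hKadj v w ((SimpleGraph.mem_neighborFinset _ _ _).mp hw))
    have hr' : (0:ℝ) < r := by exact_mod_cast hr
    have hMle : (M.ncard : ℝ)/2 ≤ ∑ v ∈ Mf, g v := by
      rw [hEq] at hA
      nlinarith [hA]
    have hsum : ∑ v ∈ Mf, g v ≤ ∑ᶠ v, g v := by
      rw [finsum_eq_sum_of_fintype]
      exact Finset.sum_le_sum_of_subset_of_nonneg (Finset.subset_univ Mf)
        (fun i _ _ => (hg.1 i).1)
    linarith
  have hmem : (M.ncard : ℝ)/2 ∈ {s : ℝ | ∃ g : V → ℝ, IsSRF G g ∧ s = ∑ᶠ v, g v} :=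
    ⟨g₀, hg₀SRF, hg₀sum.symm⟩
  have hbdd : ∀ s ∈ {s : ℝ | ∃ g : V → ℝ, IsSRF G g ∧ s = ∑ᶠ v, g v}, (M.ncard:ℝ)/2 ≤ s := by
    rintro s ⟨g, hg, rfl⟩
    exact hlow g hg
  rw [sdimf]
  exact le_antisymm (csInf_le ⟨_, hbdd⟩ hmem) (le_csInf ⟨_, hmem⟩ hbdd)
end

section
/- For any positive integer k, there exists a finite simple connected graph G such that min{ |M(G)|/2, sdim(G) } − sdim_f(G) = k. -/
open SimpleGraph

namespace ProofAux
open SimpleGraph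

/-! ### Generic lemmas about `Sset` -/

variable {V : Type*} {G' : SimpleGraph V}

lemma Sset_comm (x y : V) : Sset G' x y = Sset G' y x := by
  ext z; exact or_comm

lemma mem_Sset_iff (hG : G'.Connected) {x y z : V} :
    z ∈ Sset G' x y ↔
      G'.dist y x + G'.dist x z = G'.dist y z ∨ G'.dist x y + G'.dist y z = G'.dist x z := by
  have key : ∀ a b c : V, ((∃ p : G'.Walk a c, p.length = G'.dist a c ∧ b ∈ p.support) ↔
      G'.dist a b + G'.dist b c = G'.dist a c) := by
    intro a b c
    classical
    constructor
    · rintro ⟨p, hlen, hmem⟩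
      have h1 : G'.dist a b ≤ (p.takeUntil b hmem).length := SimpleGraph.dist_le _
      have h2 : G'.dist b c ≤ (p.dropUntil b hmem).length := SimpleGraph.dist_le _
      have h3 : (p.takeUntil b hmem).length + (p.dropUntil b hmem).length = p.length := by
        rw [← Walk.length_append, Walk.take_spec]
      have h4 := hG.dist_triangle (u := a) (v := b) (w := c)
      omega
    · intro h
      obtain ⟨p, hp⟩ := hG.exists_walk_length_eq_dist a b
      obtain ⟨q, hq⟩ := hG.exists_walk_length_eq_dist b c
      refine ⟨p.append q, ?_, ?_⟩
      · have h5 := SimpleGraph.dist_le (p.append q)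
        rw [Walk.length_append] at h5 ⊢
        omega
      · rw [Walk.mem_support_append_iff]
        exact Or.inl p.end_mem_support
  constructor
  · rintro (h | h)
    · exact Or.inl ((key y x z).mp h)
    · exact Or.inr ((key x y z).mp h)
  · rintro (h | h)
    · exact Or.inl ((key y x z).mpr h)
    · exact Or.inr ((key x y z).mpr h)

lemma left_mem_Sset (hG : G'.Connected) (x y : V) : x ∈ Sset G' x y := by
  rw [mem_Sset_iff hG]
  left
  simp [SimpleGraph.dist_self]

lemma right_mem_Sset (hG : G'.Connected) (x y : V) : y ∈ Sset G' x y := by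
  rw [Sset_comm]; exact left_mem_Sset hG y x

/-! ### Lemmas about `cone Hᶜ` -/

section Cone

variable {U : Type*} (H : SimpleGraph U)

local notation "G" => cone Hᶜ

lemma adj_none_some (u : U) : (G).Adj none (some u) := trivial
lemma adj_some_none (u : U) : (G).Adj (some u) none := trivial
lemma adj_some_some {u v : U} : (G).Adj (some u) (some v) ↔ u ≠ v ∧ ¬ H.Adj u v := by
  show Hᶜ.Adj u v ↔ _
  exact compl_adj H u v

lemma coneCompl_connected [Nonempty U] : (G).Connected := by
  rw [connected_iff]
  refine ⟨?_, ⟨none⟩⟩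
  intro x y
  have hx : ∀ w : Option U, (G).Reachable w none := by
    rintro (_ | u)
    · rfl
    · exact (adj_some_none H u).reachable
  exact (hx x).trans (hx y).symm

lemma dist_none_some (u : U) : (G).dist none (some u) = 1 :=
  dist_eq_one_iff_adj.mpr (adj_none_some H u)

lemma dist_le_two (x y : Option U) : (G).dist x y ≤ 2 := by
  rcases x with _ | u <;> rcases y with _ | v
  · simp [SimpleGraph.dist_self]
  · exact le_trans (le_of_eq (dist_none_some H v)) one_le_two
  · rw [SimpleGraph.dist_comm]
    exact le_trans (le_of_eq (dist_none_some H u)) one_le_two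
  · by_cases h : u = v
    · subst h; simp [SimpleGraph.dist_self]
    · exact SimpleGraph.dist_le
        (Walk.cons (adj_some_none H u) (Walk.cons (adj_none_some H v) Walk.nil))

lemma dist_some_some_of_adj {u v : U} (h : H.Adj u v) : (G).dist (some u) (some v) = 2 := by
  classical
  have hne : (some u : Option U) ≠ some v := by simpa using h.ne
  have h0 : (G).dist (some u) (some v) ≠ 0 := by
    rw [SimpleGraph.dist_ne_zero_iff_ne_and_reachable]
    exact ⟨hne, ((@coneCompl_connected U H ⟨u⟩).preconnected _ _)⟩
  have h1 : (G).dist (some u) (some v) ≠ 1 := by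
    intro hd
    have := SimpleGraph.dist_eq_one_iff_adj.mp hd
    rw [adj_some_some] at this
    tauto
  have h2 := dist_le_two H (some u) (some v)
  omega

lemma dist_some_some_of_nadj {u v : U} (hne : u ≠ v) (h : ¬ H.Adj u v) :
    (G).dist (some u) (some v) = 1 :=
  dist_eq_one_iff_adj.mpr ((adj_some_some H).mpr ⟨hne, h⟩)

variable [Nonempty U]

lemma Sset_of_H_adj {u v : U} (h : H.Adj u v) :
    Sset (G) (some u) (some v) = {some u, some v} := by
  have hconn : (G).Connected := coneCompl_connected H
  ext z
  rw [mem_Sset_iff hconn]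
  constructor
  · rintro (hz | hz)
    · left
      rw [SimpleGraph.dist_comm, dist_some_some_of_adj H h] at hz
      have h2 := dist_le_two H (some u) z
      have h3 := dist_le_two H (some v) z
      have h0 : (G).dist (some u) z = 0 := by omega
      exact (hconn.dist_eq_zero_iff.mp h0).symm
    · right
      rw [dist_some_some_of_adj H h] at hz
      have h2 := dist_le_two H (some u) z
      have h3 := dist_le_two H (some v) z
      have h0 : (G).dist (some v) z = 0 := by omega
      exact (hconn.dist_eq_zero_iff.mp h0).symm
  · rintro (rfl | rfl)
    · exact Or.inl (by simp [SimpleGraph.dist_self])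
    · exact Or.inr (by simp [SimpleGraph.dist_self])

lemma MMD_of_H_adj {u v : U} (h : H.Adj u v) : MMD (G) (some u) (some v) := by
  refine ⟨by simpa using h.ne, ?_, ?_⟩
  · intro w _
    rw [dist_some_some_of_adj H h]
    exact dist_le_two H w (some v)
  · intro w _
    rw [dist_some_some_of_adj H h.symm]
    exact dist_le_two H w (some u)

lemma Mset_eq (hNI : ∀ u : U, ∃ w, H.Adj u w) : Mset (G) = Set.range some := by
  ext x
  constructor
  · rintro ⟨y, hy⟩
    rcases x with _ | u
    · exfalso
      rcases y with _ | v
      · exact hy.1 rfl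
      · obtain ⟨w, hw⟩ := hNI v
        have := hy.2.1 (some w) (adj_none_some H w)
        rw [dist_none_some, dist_some_some_of_adj H hw.symm] at this
        omega
    · exact ⟨u, rfl⟩
  · rintro ⟨u, rfl⟩
    obtain ⟨w, hw⟩ := hNI u
    exact ⟨some w, MMD_of_H_adj H hw⟩

lemma witness_mem_Sset {u v w : U} (huv : u ≠ v) (hnadj : ¬ H.Adj u v)
    (h1 : H.Adj w v) (h2 : ¬ H.Adj u w) (h3 : w ≠ u) :
    some w ∈ Sset (G) (some u) (some v) := by
  rw [mem_Sset_iff (coneCompl_connected H)]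
  left
  have d1 : (G).dist (some v) (some u) = 1 :=
    dist_some_some_of_nadj H huv.symm (fun h => hnadj h.symm)
  have d2 : (G).dist (some u) (some w) = 1 := dist_some_some_of_nadj H h3.symm h2
  have d3 : (G).dist (some v) (some w) = 2 := dist_some_some_of_adj H h1.symm
  omega

lemma witness_mem_Sset' {u v w : U} (huv : u ≠ v) (hnadj : ¬ H.Adj u v)
    (h1 : H.Adj w u) (h2 : ¬ H.Adj v w) (h3 : w ≠ v) :
    some w ∈ Sset (G) (some u) (some v) := by
  rw [Sset_comm]
  exact witness_mem_Sset H huv.symm (fun h => hnadj h.symm) h1 h2 h3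

lemma witness_mem_Sset_none {u w : U} (h : H.Adj w u) :
    some w ∈ Sset (G) none (some u) := by
  rw [mem_Sset_iff (coneCompl_connected H)]
  left
  have d1 : (G).dist (some u) none = 1 := by
    rw [SimpleGraph.dist_comm]; exact dist_none_some H u
  have d2 := dist_none_some H w
  have d3 : (G).dist (some u) (some w) = 2 := dist_some_some_of_adj H h.symm
  omega

end Cone

/-! ### Transport along an equivalence -/

section Transport

variable {V W : Type*} (G : SimpleGraph V) (φ : W ≃ V)

/-- transported graph -/
def tg : SimpleGraph W := G.comap φ

lemma tg_adj (x y : W) : (tg G φ).Adj x y ↔ G.Adj (φ x) (φ y) := Iff.rfl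

def tgHomTo : tg G φ →g G := ⟨φ, fun h => h⟩

def tgHomFrom : G →g tg G φ where
  toFun := φ.symm
  map_rel' := by
    intro a b h
    show G.Adj (φ (φ.symm a)) (φ (φ.symm b))
    simpa using h

lemma tg_connected (hG : G.Connected) : (tg G φ).Connected := by
  have : Function.Surjective (tgHomFrom G φ) := φ.symm.surjective
  exact SimpleGraph.Connected.map (tgHomFrom G φ) this hG

lemma tg_dist (x y : W) : (tg G φ).dist x y = G.dist (φ x) (φ y) := by
  apply le_antisymm
  · rcases Nat.eq_zero_or_pos (G.dist (φ x) (φ y)) with h | h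
    · rcases SimpleGraph.dist_eq_zero_iff_eq_or_not_reachable.mp h with h' | h'
      · have : x = y := φ.injective h'
        subst this
        simp [SimpleGraph.dist_self, h]
      · have : ¬ (tg G φ).Reachable x y := by
          intro ⟨p⟩
          exact h' ⟨p.map (tgHomTo G φ)⟩
        rw [SimpleGraph.dist_eq_zero_of_not_reachable this]
        omega
    · obtain ⟨p, hp⟩ := SimpleGraph.exists_walk_of_dist_ne_zero (by omega :
        G.dist (φ x) (φ y) ≠ 0)
      have hq : ((p.map (tgHomFrom G φ)).copy (φ.symm_apply_apply x) (φ.symm_apply_apply y)).length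
          = p.length := by
        exact (Walk.length_copy _ _ _).trans (Walk.length_map _ _)
      calc (tg G φ).dist x y ≤ _ := SimpleGraph.dist_le _
        _ = p.length := hq
        _ = _ := hp
  · rcases Nat.eq_zero_or_pos ((tg G φ).dist x y) with h | h
    · rcases SimpleGraph.dist_eq_zero_iff_eq_or_not_reachable.mp h with h' | h'
      · subst h'
        simp [SimpleGraph.dist_self, h]
      · have : ¬ G.Reachable (φ x) (φ y) := by
          intro ⟨p⟩
          apply h'
          exact ⟨((p.map (tgHomFrom G φ)).copy (φ.symm_apply_apply x) (φ.symm_apply_apply y))⟩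
        rw [SimpleGraph.dist_eq_zero_of_not_reachable this, h]
    · obtain ⟨p, hp⟩ := SimpleGraph.exists_walk_of_dist_ne_zero (by omega :
        (tg G φ).dist x y ≠ 0)
      calc G.dist (φ x) (φ y) ≤ (p.map (tgHomTo G φ)).length := SimpleGraph.dist_le _
        _ = p.length := Walk.length_map _ _
        _ = _ := hp

lemma tg_Sset (hG : G.Connected) (x y : W) :
    Sset (tg G φ) x y = φ.symm '' (Sset G (φ x) (φ y)) := by
  ext z
  have h1 : z ∈ φ.symm '' (Sset G (φ x) (φ y)) ↔ φ z ∈ Sset G (φ x) (φ y) := by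
    constructor
    · rintro ⟨w, hw, rfl⟩; simpa using hw
    · intro h; exact ⟨φ z, h, by simp⟩
  rw [h1, mem_Sset_iff (tg_connected G φ hG), mem_Sset_iff hG,
    tg_dist, tg_dist, tg_dist, tg_dist]

lemma tg_MMD (x y : W) : MMD (tg G φ) x y ↔ MMD G (φ x) (φ y) := by
  have hmd : ∀ a b : W, MaxDistFrom (tg G φ) a b ↔ MaxDistFrom G (φ a) (φ b) := by
    intro a b
    constructor
    · intro h w' hw'
      have := h (φ.symm w') (by simpa [tg_adj] using hw')
      rwa [tg_dist, tg_dist, φ.apply_symm_apply] at this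
    · intro h w hw
      have := h (φ w) hw
      rwa [tg_dist, tg_dist]
  unfold MMD
  rw [hmd, hmd]
  simp [EmbeddingLike.apply_eq_iff_eq]

lemma tg_Mset : Mset (tg G φ) = φ.symm '' Mset G := by
  ext x
  constructor
  · rintro ⟨y, hy⟩
    exact ⟨φ x, ⟨φ y, (tg_MMD G φ x y).mp hy⟩, by simp⟩
  · rintro ⟨w, ⟨y, hy⟩, rfl⟩
    refine ⟨φ.symm y, ?_⟩
    rw [tg_MMD]
    simpa using hy

lemma tg_Mset_ncard : (Mset (tg G φ)).ncard = (Mset G).ncard := by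
  rw [tg_Mset, Set.ncard_image_of_injective _ φ.symm.injective]

lemma tg_sdim (hG : G.Connected) : sdim (tg G φ) = sdim G := by
  unfold sdim
  congr 1
  ext n
  constructor
  · rintro ⟨S, hS, rfl⟩
    refine ⟨φ '' S, ?_, (Set.ncard_image_of_injective _ φ.injective)⟩
    intro a b hab
    obtain ⟨z, hzS, hz⟩ := hS (φ.symm a) (φ.symm b) (fun h => hab (by simpa using congrArg φ h))
    rw [tg_Sset G φ hG] at hz
    obtain ⟨w, hw, hwz⟩ := hz
    refine ⟨φ z, Set.mem_image_of_mem _ hzS, ?_⟩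
    have : φ z = w := by rw [← hwz]; simp
    rw [this]
    simpa using hw
  · rintro ⟨S, hS, rfl⟩
    refine ⟨φ.symm '' S, ?_, (Set.ncard_image_of_injective _ φ.symm.injective)⟩
    intro a b hab
    obtain ⟨z, hzS, hz⟩ := hS (φ a) (φ b) (fun h => hab (φ.injective h))
    refine ⟨φ.symm z, Set.mem_image_of_mem _ hzS, ?_⟩
    rw [tg_Sset G φ hG]
    exact Set.mem_image_of_mem _ hz

lemma tg_sdimf (hG : G.Connected) : sdimf (tg G φ) = sdimf G := by
  unfold sdimf
  congr 1
  ext s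
  have key : ∀ g : W → ℝ, ∀ x y : V, (∑ᶠ z ∈ Sset (tg G φ) (φ.symm x) (φ.symm y), g z)
      = ∑ᶠ z ∈ Sset G x y, g (φ.symm z) := by
    intro g x y
    rw [tg_Sset G φ hG, φ.apply_symm_apply, φ.apply_symm_apply]
    exact finsum_mem_image (φ.symm.injective.injOn)
  constructor
  · rintro ⟨g, ⟨hg1, hg2⟩, rfl⟩
    refine ⟨g ∘ φ.symm, ⟨fun v => hg1 _, ?_⟩, ?_⟩
    · intro x y hxy
      have := hg2 (φ.symm x) (φ.symm y) (fun h => hxy (by simpa using congrArg φ h))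
      rwa [key g x y] at this
    · exact (finsum_comp_equiv φ.symm).symm
  · rintro ⟨g, ⟨hg1, hg2⟩, rfl⟩
    refine ⟨g ∘ φ, ⟨fun v => hg1 _, ?_⟩, ?_⟩
    · intro x y hxy
      have h2 := hg2 (φ x) (φ y) (fun h => hxy (φ.injective h))
      have h3 := key (g ∘ φ) (φ x) (φ y)
      simp only [φ.symm_apply_apply] at h3
      rw [h3]
      have hz : ∀ z, (g ∘ φ) (φ.symm z) = g z := by intro z; simp
      calc (1:ℝ) ≤ ∑ᶠ z ∈ Sset G (φ x) (φ y), g z := h2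
        _ = _ := (finsum_mem_congr rfl (fun z _ => (hz z).symm))
    · exact (finsum_comp_equiv φ).symm

end Transport

end ProofAux


namespace ProofAux
open Sum

section Concrete

variable (r : ℕ)

abbrev Uc := Fin r ⊕ (Fin r ⊕ (Fin r ⊕ Fin r))

def hadj : Uc r → Uc r → Prop
  | inl i, inl i' => i ≠ i'
  | inr (inl j), inr (inr (inl m)) => j = m
  | inr (inr (inl m)), inr (inl j) => j = m
  | inr (inl j), inr (inr (inr m)) => j ≠ m
  | inr (inr (inr m)), inr (inl j) => j ≠ m
  | _, _ => False

def Hc : SimpleGraph (Uc r) where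
  Adj := hadj r
  symm := by
    constructor
    rintro (i | j | m | m) (i' | j' | m' | m') h <;>
      first
        | exact h.elim
        | exact Ne.symm h
        | exact h.symm
        | exact h
  loopless := by
    constructor
    rintro (i | j | m | m) h
    · exact h rfl
    all_goals exact h

def ua (i : Fin r) : Uc r := inl i
def uc (j : Fin r) : Uc r := inr (inl j)
def us (m : Fin r) : Uc r := inr (inr (inl m))
def up (m : Fin r) : Uc r := inr (inr (inr m))

variable {r}

/- adjacency facts -/
lemma adj_aa {i i' : Fin r} (h : i ≠ i') : (Hc r).Adj (ua r i) (ua r i') := h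
lemma adj_cs {j : Fin r} : (Hc r).Adj (uc r j) (us r j) := rfl
lemma adj_sc {j : Fin r} : (Hc r).Adj (us r j) (uc r j) := rfl
lemma adj_cp {j m : Fin r} (h : j ≠ m) : (Hc r).Adj (uc r j) (up r m) := h
lemma adj_pc {j m : Fin r} (h : j ≠ m) : (Hc r).Adj (up r m) (uc r j) := h

lemma nadj_ac {i j : Fin r} : ¬ (Hc r).Adj (ua r i) (uc r j) := fun h => h
lemma nadj_as {i m : Fin r} : ¬ (Hc r).Adj (ua r i) (us r m) := fun h => h
lemma nadj_ap {i m : Fin r} : ¬ (Hc r).Adj (ua r i) (up r m) := fun h => h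
lemma nadj_ca {i j : Fin r} : ¬ (Hc r).Adj (uc r j) (ua r i) := fun h => h
lemma nadj_sa {i m : Fin r} : ¬ (Hc r).Adj (us r m) (ua r i) := fun h => h
lemma nadj_pa {i m : Fin r} : ¬ (Hc r).Adj (up r m) (ua r i) := fun h => h
lemma nadj_cc {j j' : Fin r} : ¬ (Hc r).Adj (uc r j) (uc r j') := fun h => h
lemma nadj_ss {m m' : Fin r} : ¬ (Hc r).Adj (us r m) (us r m') := fun h => h
lemma nadj_sp {m m' : Fin r} : ¬ (Hc r).Adj (us r m) (up r m') := fun h => h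
lemma nadj_ps {m m' : Fin r} : ¬ (Hc r).Adj (up r m) (us r m') := fun h => h
lemma nadj_pp {m m' : Fin r} : ¬ (Hc r).Adj (up r m) (up r m') := fun h => h
lemma nadj_cs {j m : Fin r} (h : j ≠ m) : ¬ (Hc r).Adj (uc r j) (us r m) := h
lemma nadj_sc {j m : Fin r} (h : j ≠ m) : ¬ (Hc r).Adj (us r m) (uc r j) := h
lemma nadj_cp {m : Fin r} : ¬ (Hc r).Adj (uc r m) (up r m) := fun h => h rfl
lemma nadj_pc {m : Fin r} : ¬ (Hc r).Adj (up r m) (uc r m) := fun h => h rfl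

/- distinctness of vertex classes -/
lemma ne_ac {i j : Fin r} : ua r i ≠ uc r j := fun h => by simp [ua, uc] at h
lemma ne_as {i m : Fin r} : ua r i ≠ us r m := fun h => by simp [ua, us] at h
lemma ne_ap {i m : Fin r} : ua r i ≠ up r m := fun h => by simp [ua, up] at h
lemma ne_cs {j m : Fin r} : uc r j ≠ us r m := fun h => by simp [uc, us] at h
lemma ne_cp {j m : Fin r} : uc r j ≠ up r m := fun h => by simp [uc, up] at h
lemma ne_sp {m m' : Fin r} : us r m ≠ up r m' := fun h => by simp [us, up] at h

lemma fin_exists_ne_ne (hr : 4 ≤ r) (i i' : Fin r) : ∃ j : Fin r, j ≠ i ∧ j ≠ i' := by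
  have h : ({i, i'} : Finset (Fin r))ᶜ.Nonempty := by
    rw [← Finset.card_pos, Finset.card_compl]
    have h2 : ({i, i'} : Finset (Fin r)).card ≤ 2 :=
      (Finset.card_insert_le _ _).trans (by simp)
    have h3 : Fintype.card (Fin r) = r := Fintype.card_fin r
    omega
  obtain ⟨j, hj⟩ := h
  rw [Finset.mem_compl, Finset.mem_insert, Finset.mem_singleton] at hj
  push_neg at hj
  exact ⟨j, hj.1, hj.2⟩

lemma fin_exists_ne (hr : 4 ≤ r) (i : Fin r) : ∃ j : Fin r, j ≠ i := by
  obtain ⟨j, hj, _⟩ := fin_exists_ne_ne hr i i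
  exact ⟨j, hj⟩

lemma hNI (hr : 4 ≤ r) : ∀ u : Uc r, ∃ w, (Hc r).Adj u w := by
  rintro (i | j | m | m)
  · obtain ⟨i', hi'⟩ := fin_exists_ne hr i
    exact ⟨ua r i', adj_aa (Ne.symm hi')⟩
  · exact ⟨us r j, adj_cs⟩
  · exact ⟨uc r m, adj_sc⟩
  · obtain ⟨j, hj⟩ := fin_exists_ne hr m
    exact ⟨uc r j, adj_pc hj⟩

lemma Uc_nonempty (hr : 4 ≤ r) : Nonempty (Uc r) := ⟨inl ⟨0, by omega⟩⟩

lemma Gc_connected (hr : 4 ≤ r) : (cone (Hc r)ᶜ).Connected := by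
  haveI := Uc_nonempty hr
  exact coneCompl_connected _

lemma Gc_Mset_ncard (hr : 4 ≤ r) : (Mset (cone (Hc r)ᶜ)).ncard = 4 * r := by
  haveI := Uc_nonempty hr
  rw [Mset_eq _ (hNI hr)]
  have h1 : (Set.range (some : Uc r → Option (Uc r))).ncard = Nat.card (Uc r) := by
    rw [← Nat.card_coe_set_eq, Nat.card_range_of_injective (Option.some_injective _)]
  rw [h1, Nat.card_eq_fintype_card]
  simp only [Fintype.card_sum, Fintype.card_fin]
  omega

end Concrete
end ProofAux


namespace ProofAux
open Sum

section ConcreteSdim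

variable {r : ℕ}

lemma Gc_sdim (hr : 4 ≤ r) : sdim (cone (Hc r)ᶜ) = 2 * r - 1 := by
  classical
  haveI := Uc_nonempty hr
  have hconn : (cone (Hc r)ᶜ).Connected := Gc_connected hr
  set G := cone (Hc r)ᶜ with hG
  -- the cover set
  set z0 : Fin r := ⟨0, by omega⟩ with hz0
  set F : Finset (Option (Uc r)) :=
    ((Finset.univ.erase z0).image (fun i => some (ua r i))) ∪
      (Finset.univ.image (fun j => some (uc r j))) with hF
  have hFa : ∀ i : Fin r, i ≠ z0 → some (ua r i) ∈ F := by
    intro i hi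
    apply Finset.mem_union_left
    exact Finset.mem_image_of_mem _ (Finset.mem_erase.mpr ⟨hi, Finset.mem_univ _⟩)
  have hFc : ∀ j : Fin r, some (uc r j) ∈ F := by
    intro j
    exact Finset.mem_union_right _ (Finset.mem_image_of_mem _ (Finset.mem_univ _))
  have hinj_a : Function.Injective (fun i : Fin r => (some (ua r i) : Option (Uc r))) := by
    intro a b h; simpa [ua] using h
  have hinj_c : Function.Injective (fun j : Fin r => (some (uc r j) : Option (Uc r))) := by
    intro a b h; simpa [uc] using h
  have hcard : F.card = 2 * r - 1 := by
    rw [hF, Finset.card_union_of_disjoint, Finset.card_image_of_injective _ hinj_a,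
      Finset.card_image_of_injective _ hinj_c, Finset.card_erase_of_mem (Finset.mem_univ _)]
    · simp only [Finset.card_univ, Fintype.card_fin]
      omega
    · rw [Finset.disjoint_left]
      rintro x hx hy
      simp only [Finset.mem_image] at hx hy
      obtain ⟨i, _, rfl⟩ := hx
      obtain ⟨j, _, hj⟩ := hy
      rw [Option.some_inj] at hj
      exact ne_ac hj.symm
  -- upper bound : F is a strong resolving set
  have keyNone : ∀ u : Uc r, ∃ z ∈ (F : Set (Option (Uc r))), z ∈ Sset G none (some u) := by
    rintro (i | j | m | m)
    · by_cases hi : i = z0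
      · obtain ⟨i', hi'⟩ := fin_exists_ne hr i
        refine ⟨some (ua r i'), hFa i' (by rw [← hi]; exact hi'), ?_⟩
        exact witness_mem_Sset_none _ (adj_aa hi')
      · exact ⟨some (ua r i), hFa i hi, right_mem_Sset hconn _ _⟩
    · exact ⟨some (uc r j), hFc j, right_mem_Sset hconn _ _⟩
    · exact ⟨some (uc r m), hFc m, witness_mem_Sset_none _ adj_cs⟩
    · obtain ⟨j, hj⟩ := fin_exists_ne hr m
      exact ⟨some (uc r j), hFc j, witness_mem_Sset_none _ (adj_cp hj)⟩
  have keySome : ∀ u v : Uc r, u ≠ v →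
      ∃ z ∈ (F : Set (Option (Uc r))), z ∈ Sset G (some u) (some v) := by
    rintro (i | j | m | m) (i' | j' | m' | m') huv
    · -- a a
      by_cases hi : i = z0
      · refine ⟨some (ua r i'), hFa i' ?_, right_mem_Sset hconn _ _⟩
        intro h; exact huv (by rw [hi, h])
      · exact ⟨some (ua r i), hFa i hi, left_mem_Sset hconn _ _⟩
    · -- a c
      exact ⟨some (uc r j'), hFc j', right_mem_Sset hconn _ _⟩
    · -- a s
      exact ⟨some (uc r m'), hFc m',
        witness_mem_Sset _ huv nadj_as adj_cs nadj_ac (Ne.symm ne_ac)⟩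
    · -- a p
      obtain ⟨j, hj⟩ := fin_exists_ne hr m'
      exact ⟨some (uc r j), hFc j,
        witness_mem_Sset _ huv nadj_ap (adj_cp hj) nadj_ac (Ne.symm ne_ac)⟩
    · -- c a
      exact ⟨some (uc r j), hFc j, left_mem_Sset hconn _ _⟩
    · -- c c
      exact ⟨some (uc r j), hFc j, left_mem_Sset hconn _ _⟩
    · -- c s
      exact ⟨some (uc r j), hFc j, left_mem_Sset hconn _ _⟩
    · -- c p
      exact ⟨some (uc r j), hFc j, left_mem_Sset hconn _ _⟩
    · -- s a
      exact ⟨some (uc r m), hFc m,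
        witness_mem_Sset' _ huv nadj_sa adj_cs nadj_ac (Ne.symm ne_ac)⟩
    · -- s c
      exact ⟨some (uc r j'), hFc j', right_mem_Sset hconn _ _⟩
    · -- s s
      have hm : m ≠ m' := fun h => huv (by rw [h])
      exact ⟨some (uc r m'), hFc m',
        witness_mem_Sset _ huv nadj_ss adj_cs (nadj_sc (Ne.symm hm)) ne_cs⟩
    · -- s p
      obtain ⟨j, hj1, hj2⟩ := fin_exists_ne_ne hr m m'
      exact ⟨some (uc r j), hFc j,
        witness_mem_Sset _ huv nadj_sp (adj_cp hj2) (nadj_sc hj1) ne_cs⟩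
    · -- p a
      obtain ⟨j, hj⟩ := fin_exists_ne hr m
      exact ⟨some (uc r j), hFc j,
        witness_mem_Sset' _ huv nadj_pa (adj_cp hj) nadj_ac (Ne.symm ne_ac)⟩
    · -- p c
      exact ⟨some (uc r j'), hFc j', right_mem_Sset hconn _ _⟩
    · -- p s
      obtain ⟨j, hj1, hj2⟩ := fin_exists_ne_ne hr m' m
      exact ⟨some (uc r j), hFc j,
        witness_mem_Sset' _ huv nadj_ps (adj_cp hj2) (nadj_sc hj1) ne_cs⟩
    · -- p p
      have hm : m ≠ m' := fun h => huv (by rw [h])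
      exact ⟨some (uc r m), hFc m,
        witness_mem_Sset _ huv nadj_pp (adj_cp hm) nadj_pc ne_cp⟩
  have hSR : IsSRSet G (F : Set (Option (Uc r))) := by
    rintro (_ | u) (_ | v) hxy
    · exact absurd rfl hxy
    · exact keyNone v
    · obtain ⟨z, hz1, hz2⟩ := keyNone u
      exact ⟨z, hz1, by rwa [Sset_comm]⟩
    · exact keySome u v (fun h => hxy (by rw [h]))
  -- lower bound
  have hlow : ∀ S : Set (Option (Uc r)), IsSRSet G S → 2 * r - 1 ≤ S.ncard := by
    intro S hS
    set T := S.toFinite.toFinset with hT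
    have hTmem : ∀ x, x ∈ T ↔ x ∈ S := fun x => S.toFinite.mem_toFinset
    set Af : Finset (Option (Uc r)) := Finset.univ.image (fun i => some (ua r i)) with hAf
    have hAcard : Af.card = r := by
      rw [hAf, Finset.card_image_of_injective _ hinj_a, Finset.card_univ, Fintype.card_fin]
    have hMiss : (Af.filter (· ∉ S)).card ≤ 1 := by
      rw [Finset.card_le_one]
      intro x hx y hy
      simp only [Finset.mem_filter, hAf, Finset.mem_image] at hx hy
      obtain ⟨⟨i, _, rfl⟩, hxS⟩ := hx
      obtain ⟨⟨i', _, rfl⟩, hyS⟩ := hy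
      by_contra hne
      have hii : i ≠ i' := fun h => hne (by rw [h])
      obtain ⟨z, hzS, hz⟩ := hS (some (ua r i)) (some (ua r i'))
        (fun h => hii (by simpa [ua] using h))
      rw [Sset_of_H_adj _ (adj_aa hii)] at hz
      rcases hz with rfl | rfl
      · exact hxS hzS
      · exact hyS hzS
    have hA : r - 1 ≤ (Af.filter (· ∈ S)).card := by
      have := Finset.card_filter_add_card_filter_not (s := Af) (p := (· ∈ S))
      omega
    have hpair : ∀ j : Fin r, some (uc r j) ∈ S ∨ some (us r j) ∈ S := by
      intro j
      obtain ⟨z, hzS, hz⟩ := hS (some (uc r j)) (some (us r j))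
        (fun h => ne_cs (Option.some_inj.mp h))
      rw [Sset_of_H_adj _ (adj_cs (j := j))] at hz
      rcases hz with rfl | rfl
      · exact Or.inl hzS
      · exact Or.inr hzS
    set f : Fin r → Option (Uc r) :=
      fun j => if some (uc r j) ∈ S then some (uc r j) else some (us r j) with hf
    have hfS : ∀ j, f j ∈ S := by
      intro j
      rcases hpair j with h | h
      · simp [hf, h]
      · by_cases h' : some (uc r j) ∈ S
        · simp [hf, h']
        · simp [hf, h', h]
    have hfInj : Function.Injective f := by
      intro a b hab
      rw [hf] at hab
      by_cases ha : some (uc r a) ∈ S <;> by_cases hb : some (uc r b) ∈ S <;>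
        simp only [ha, hb, if_pos, if_neg, if_true, if_false] at hab <;>
        rw [Option.some_inj] at hab
      · simpa [uc] using hab
      · exact absurd hab ne_cs
      · exact absurd hab.symm ne_cs
      · simpa [us] using hab
    have hsub : (Af.filter (· ∈ S)) ∪ Finset.univ.image f ⊆ T := by
      intro x hx
      rw [hTmem]
      rcases Finset.mem_union.mp hx with h | h
      · exact (Finset.mem_filter.mp h).2
      · obtain ⟨j, _, rfl⟩ := Finset.mem_image.mp h
        exact hfS j
    have hdisj : Disjoint (Af.filter (· ∈ S)) (Finset.univ.image f) := by
      rw [Finset.disjoint_left]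
      intro x hx hy
      obtain ⟨hx1, _⟩ := Finset.mem_filter.mp hx
      obtain ⟨i, _, rfl⟩ := Finset.mem_image.mp hx1
      obtain ⟨j, _, hj⟩ := Finset.mem_image.mp hy
      rw [hf] at hj
      by_cases hc : some (uc r j) ∈ S <;> simp only [hc, if_true, if_false] at hj <;>
        rw [Option.some_inj] at hj
      · exact ne_ac hj.symm
      · exact ne_as hj.symm
    have hcardf : (Finset.univ.image f).card = r := by
      rw [Finset.card_image_of_injective _ hfInj, Finset.card_univ, Fintype.card_fin]
    have hTcard : ((Af.filter (· ∈ S)) ∪ Finset.univ.image f).card ≤ T.card :=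
      Finset.card_le_card hsub
    rw [Finset.card_union_of_disjoint hdisj, hcardf] at hTcard
    have hncard : S.ncard = T.card := Set.ncard_eq_toFinset_card S S.toFinite
    omega
  apply le_antisymm
  · exact Nat.sInf_le ⟨(F : Set (Option (Uc r))), hSR, by rw [Set.ncard_coe_finset, hcard]⟩
  · refine le_csInf ⟨2 * r - 1, ⟨(F : Set (Option (Uc r))), hSR,
      by rw [Set.ncard_coe_finset, hcard]⟩⟩ ?_
    rintro n ⟨S, hS, rfl⟩
    exact hlow S hS

end ConcreteSdim
end ProofAux


namespace ProofAux
open Sum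

section ConcreteSdimf

variable {r : ℕ}

lemma one_le_finsum_mem {V : Type*} [Fintype V] {g : V → ℝ} (hg : ∀ v, 0 ≤ g v)
    {s : Set V} {F : Finset V} (hsub : (F : Set V) ⊆ s) (h1 : 1 ≤ ∑ z ∈ F, g z) :
    1 ≤ ∑ᶠ z ∈ s, g z := by
  classical
  have heq : ∑ᶠ z ∈ s, g z = ∑ z ∈ s.toFinset, g z := by
    rw [← finsum_mem_coe_finset, Set.coe_toFinset]
  rw [heq]
  refine le_trans h1 (Finset.sum_le_sum_of_subset_of_nonneg ?_ (fun v _ _ => hg v))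
  intro x hx; rw [Set.mem_toFinset]; exact hsub hx

noncomputable def gW (r : ℕ) : Option (Uc r) → ℝ
  | some (inl _) => 1/2
  | some (inr (inl _)) => 1
  | _ => 0

lemma gW_nonneg : ∀ v, 0 ≤ gW r v := by
  rintro (_ | (i | j | m | m)) <;> norm_num [gW]

lemma gW_le_one : ∀ v, gW r v ≤ 1 := by
  rintro (_ | (i | j | m | m)) <;> norm_num [gW]

lemma gW_a (i : Fin r) : gW r (some (ua r i)) = 1/2 := rfl
lemma gW_c (j : Fin r) : gW r (some (uc r j)) = 1 := rfl

lemma one_le_single {s : Set (Option (Uc r))} {j : Fin r}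
    (hz : some (uc r j) ∈ s) : 1 ≤ ∑ᶠ z ∈ s, gW r z := by
  refine one_le_finsum_mem gW_nonneg (F := {some (uc r j)}) ?_ ?_
  · intro x hx
    rw [Finset.coe_singleton, Set.mem_singleton_iff] at hx
    rw [hx]; exact hz
  · rw [Finset.sum_singleton, gW_c]

lemma one_le_double {s : Set (Option (Uc r))} {i i' : Fin r} (hii : i ≠ i')
    (hz : some (ua r i) ∈ s) (hz' : some (ua r i') ∈ s) : 1 ≤ ∑ᶠ z ∈ s, gW r z := by
  have hne : (some (ua r i) : Option (Uc r)) ≠ some (ua r i') := by simpa [ua] using hii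
  refine one_le_finsum_mem gW_nonneg (F := {some (ua r i), some (ua r i')}) ?_ ?_
  · intro x hx
    rw [Finset.coe_pair, Set.mem_insert_iff, Set.mem_singleton_iff] at hx
    rcases hx with rfl | rfl
    · exact hz
    · exact hz'
  · rw [Finset.sum_pair hne, gW_a, gW_a]
    norm_num

lemma gW_isSRF (hr : 4 ≤ r) : IsSRF (cone (Hc r)ᶜ) (gW r) := by
  haveI := Uc_nonempty hr
  have hconn : (cone (Hc r)ᶜ).Connected := Gc_connected hr
  set G := cone (Hc r)ᶜ with hG
  refine ⟨fun v => ⟨gW_nonneg v, gW_le_one v⟩, ?_⟩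
  have keyNone : ∀ u : Uc r, 1 ≤ ∑ᶠ z ∈ Sset G none (some u), gW r z := by
    rintro (i | j | m | m)
    · obtain ⟨i', hi'⟩ := fin_exists_ne hr i
      exact one_le_double (Ne.symm hi') (right_mem_Sset hconn _ _)
        (witness_mem_Sset_none _ (adj_aa hi'))
    · exact one_le_single (right_mem_Sset hconn _ _)
    · exact one_le_single (witness_mem_Sset_none _ adj_cs)
    · obtain ⟨j, hj⟩ := fin_exists_ne hr m
      exact one_le_single (witness_mem_Sset_none _ (adj_cp hj))
  have keySome : ∀ u v : Uc r, u ≠ v → 1 ≤ ∑ᶠ z ∈ Sset G (some u) (some v), gW r z := by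
    rintro (i | j | m | m) (i' | j' | m' | m') huv
    · exact one_le_double (fun h => huv (by rw [h]))
        (left_mem_Sset hconn _ _) (right_mem_Sset hconn _ _)
    · exact one_le_single (right_mem_Sset hconn _ _)
    · exact one_le_single (witness_mem_Sset _ huv nadj_as adj_cs nadj_ac (Ne.symm ne_ac))
    · obtain ⟨j, hj⟩ := fin_exists_ne hr m'
      exact one_le_single (witness_mem_Sset _ huv nadj_ap (adj_cp hj) nadj_ac (Ne.symm ne_ac))
    · exact one_le_single (left_mem_Sset hconn _ _)
    · exact one_le_single (left_mem_Sset hconn _ _)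
    · exact one_le_single (left_mem_Sset hconn _ _)
    · exact one_le_single (left_mem_Sset hconn _ _)
    · exact one_le_single (witness_mem_Sset' _ huv nadj_sa adj_cs nadj_ac (Ne.symm ne_ac))
    · exact one_le_single (right_mem_Sset hconn _ _)
    · have hm : m ≠ m' := fun h => huv (by rw [h])
      exact one_le_single (witness_mem_Sset _ huv nadj_ss adj_cs (nadj_sc (Ne.symm hm)) ne_cs)
    · obtain ⟨j, hj1, hj2⟩ := fin_exists_ne_ne hr m m'
      exact one_le_single (witness_mem_Sset _ huv nadj_sp (adj_cp hj2) (nadj_sc hj1) ne_cs)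
    · obtain ⟨j, hj⟩ := fin_exists_ne hr m
      exact one_le_single (witness_mem_Sset' _ huv nadj_pa (adj_cp hj) nadj_ac (Ne.symm ne_ac))
    · exact one_le_single (right_mem_Sset hconn _ _)
    · obtain ⟨j, hj1, hj2⟩ := fin_exists_ne_ne hr m' m
      exact one_le_single (witness_mem_Sset' _ huv nadj_ps (adj_cp hj2) (nadj_sc hj1) ne_cs)
    · have hm : m ≠ m' := fun h => huv (by rw [h])
      exact one_le_single (witness_mem_Sset _ huv nadj_pp (adj_cp hm) nadj_pc ne_cp)
  rintro (_ | u) (_ | v) hxy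
  · exact absurd rfl hxy
  · exact keyNone v
  · rw [Sset_comm]
    exact keyNone u
  · exact keySome u v (fun h => hxy (by rw [h]))

lemma gW_total (hr : 4 ≤ r) : ∑ᶠ v, gW r v = 3 * (r : ℝ) / 2 := by
  rw [finsum_eq_sum_of_fintype, Fintype.sum_option, Fintype.sum_sum_type,
    Fintype.sum_sum_type, Fintype.sum_sum_type]
  have h0 : gW r none = 0 := rfl
  have hs : ∀ m : Fin r, gW r (some (inr (inr (inl m)))) = 0 := fun _ => rfl
  have hp : ∀ m : Fin r, gW r (some (inr (inr (inr m)))) = 0 := fun _ => rfl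
  simp only [h0]
  rw [Finset.sum_congr rfl (fun m _ => hs m), Finset.sum_congr rfl (fun m _ => hp m)]
  simp only [Finset.sum_const, Finset.card_univ, Fintype.card_fin, smul_zero]
  have ha : ∀ i : Fin r, gW r (some (inl i)) = 1/2 := fun _ => rfl
  have hc : ∀ j : Fin r, gW r (some (inr (inl j))) = 1 := fun _ => rfl
  rw [Finset.sum_congr rfl (fun i _ => ha i), Finset.sum_congr rfl (fun j _ => hc j)]
  simp only [Finset.sum_const, Finset.card_univ, Fintype.card_fin, nsmul_eq_mul, mul_one]
  ring

lemma srf_lower (hr : 4 ≤ r) {g : Option (Uc r) → ℝ}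
    (hg : IsSRF (cone (Hc r)ᶜ) g) : 3 * (r : ℝ) / 2 ≤ ∑ᶠ v, g v := by
  classical
  haveI := Uc_nonempty hr
  obtain ⟨hg1, hg2⟩ := hg
  have hrR : (4 : ℝ) ≤ (r : ℝ) := by exact_mod_cast hr
  -- clique constraints
  have hpairs : ∀ i i' : Fin r, i ≠ i' →
      1 ≤ g (some (ua r i)) + g (some (ua r i')) := by
    intro i i' hii
    have h := hg2 (some (ua r i)) (some (ua r i')) (by simpa [ua] using hii)
    rwa [Sset_of_H_adj _ (adj_aa hii), finsum_mem_pair (by simpa [ua] using hii)] at h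
  -- filler constraints
  have hcs : ∀ j : Fin r, 1 ≤ g (some (uc r j)) + g (some (us r j)) := by
    intro j
    have h := hg2 (some (uc r j)) (some (us r j)) (by simp [uc, us])
    rwa [Sset_of_H_adj _ (adj_cs (j := j)), finsum_mem_pair (by simp [uc, us])] at h
  -- part sums
  have hA : (r : ℝ) / 2 ≤ ∑ i : Fin r, g (some (ua r i)) := by
    obtain ⟨i0, -, hmin⟩ := Finset.exists_min_image Finset.univ
      (fun i => g (some (ua r i))) ⟨⟨0, by omega⟩, Finset.mem_univ _⟩
    by_cases hc : (1:ℝ)/2 ≤ g (some (ua r i0))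
    · have : ∀ i ∈ Finset.univ, (1:ℝ)/2 ≤ g (some (ua r i)) :=
        fun i _ => le_trans hc (hmin i (Finset.mem_univ i))
      have h2 := Finset.sum_le_sum this
      rw [Finset.sum_const, Finset.card_univ, Fintype.card_fin, nsmul_eq_mul] at h2
      linarith
    · push_neg at hc
      have hsplit := Finset.add_sum_erase Finset.univ
        (fun i => g (some (ua r i))) (Finset.mem_univ i0)
      have h2 : ∀ i ∈ Finset.univ.erase i0,
          1 - g (some (ua r i0)) ≤ g (some (ua r i)) := by
        intro i hi
        have hii : i ≠ i0 := (Finset.mem_erase.mp hi).1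
        have := hpairs i i0 hii
        linarith
      have h3 := Finset.sum_le_sum h2
      rw [Finset.sum_const, Finset.card_erase_of_mem (Finset.mem_univ _),
        Finset.card_univ, Fintype.card_fin, nsmul_eq_mul] at h3
      have hcast : ((r - 1 : ℕ) : ℝ) = (r : ℝ) - 1 := by
        rw [Nat.cast_sub (by omega)]; norm_num
      rw [hcast] at h3
      have h00 := (hg1 (some (ua r i0))).1
      nlinarith [h3, hsplit]
  have hCS : (r : ℝ) ≤ ∑ j : Fin r, (g (some (uc r j)) + g (some (us r j))) := by
    have h2 := Finset.sum_le_sum (fun j (_ : j ∈ Finset.univ) => hcs j)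
    rw [Finset.sum_const, Finset.card_univ, Fintype.card_fin, nsmul_eq_mul, mul_one] at h2
    exact h2
  have hP : (0:ℝ) ≤ ∑ m : Fin r, g (some (up r m)) :=
    Finset.sum_nonneg (fun m _ => (hg1 _).1)
  have hnone := (hg1 none).1
  rw [finsum_eq_sum_of_fintype, Fintype.sum_option, Fintype.sum_sum_type,
    Fintype.sum_sum_type, Fintype.sum_sum_type]
  rw [Finset.sum_add_distrib] at hCS
  simp only [ua, uc, us, up] at hA hCS hP
  linarith

lemma Gc_sdimf (hr : 4 ≤ r) : sdimf (cone (Hc r)ᶜ) = 3 * (r : ℝ) / 2 := by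
  haveI := Uc_nonempty hr
  apply le_antisymm
  · apply csInf_le
    · refine ⟨0, ?_⟩
      rintro s ⟨g, hg, rfl⟩
      rw [finsum_eq_sum_of_fintype]
      exact Finset.sum_nonneg (fun v _ => (hg.1 v).1)
    · exact ⟨gW r, gW_isSRF hr, (gW_total hr).symm⟩
  · refine le_csInf ⟨3 * (r:ℝ)/2, gW r, gW_isSRF hr, (gW_total hr).symm⟩ ?_
    rintro s ⟨g, hg, rfl⟩
    exact srf_lower hr hg

end ConcreteSdimf
end ProofAux

/-- For every positive integer `k` there is a finite connected graph `G`
such that `min{ |M(G)|/2, sdim(G) } − sdim_f(G) = k`. -/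
theorem exists_graph_min_sub_sdimf_eq (k : ℕ) (hk : 0 < k) :
    ∃ (n : ℕ) (G : SimpleGraph (Fin n)), G.Connected ∧
      min (((Mset G).ncard : ℝ) / 2) (sdim G : ℝ) - sdimf G = (k : ℝ) := by
  set r := 2 * k + 2 with hrdef
  have hr : 4 ≤ r := by omega
  haveI := ProofAux.Uc_nonempty hr
  have hconn := ProofAux.Gc_connected hr
  have hcard : Fintype.card (Option (ProofAux.Uc r)) = 4 * r + 1 := by
    simp only [Fintype.card_option, Fintype.card_sum, Fintype.card_fin]
    omega
  let φ : Fin (4 * r + 1) ≃ Option (ProofAux.Uc r) := (Fintype.equivFinOfCardEq hcard).symm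
  refine ⟨4 * r + 1, ProofAux.tg (cone (ProofAux.Hc r)ᶜ) φ,
    ProofAux.tg_connected _ _ hconn, ?_⟩
  rw [ProofAux.tg_Mset_ncard, ProofAux.tg_sdim _ _ hconn, ProofAux.tg_sdimf _ _ hconn,
    ProofAux.Gc_Mset_ncard hr, ProofAux.Gc_sdim hr, ProofAux.Gc_sdimf hr]
  have h1 : ((2 * r - 1 : ℕ) : ℝ) = 2 * (r : ℝ) - 1 := by
    rw [Nat.cast_sub (by omega)]; push_cast; ring
  have h2 : ((4 * r : ℕ) : ℝ) / 2 = 2 * (r : ℝ) := by push_cast; ring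
  rw [h1, h2, min_eq_right (by linarith [Nat.cast_nonneg (α := ℝ) r] :
    2 * (r : ℝ) - 1 ≤ 2 * (r : ℝ))]
  have h3 : (r : ℝ) = 2 * (k : ℝ) + 2 := by rw [hrdef]; push_cast; ring
  rw [h3]; ring
end

section
/- Let H be a disconnected graph of order m whose connected components are H^1, …, H^k of orders a_1, …, a_k respectively, with a_k = max{a_i : 1 ≤ i ≤ k}. Then min{ m − a_k, ⌊m/2⌋ } ≤ sdim_f(K_1 ⊙ H) ≤ m/2. -/
open SimpleGraph

section Helpers

lemma Sset_comm {V : Type*} (G : SimpleGraph V) (x y : V) : Sset G x y = Sset G y x :=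
  Set.ext fun _ => or_comm

variable {W : Type*} {H : SimpleGraph W}

lemma cone_adj_none_some (w : W) : (cone H).Adj none (some w) := trivial

lemma cone_adj_some_none (w : W) : (cone H).Adj (some w) none := trivial

lemma cone_adj_some_some {w w' : W} : (cone H).Adj (some w) (some w') ↔ H.Adj w w' := Iff.rfl

lemma cone_reachable (u v : Option W) : (cone H).Reachable u v := by
  have hn : ∀ x : Option W, (cone H).Reachable x none := by
    rintro (_ | w)
    · exact Reachable.refl _
    · exact (cone_adj_some_none w).reachable
  exact (hn u).trans (hn v).symm

lemma cone_dist_le_two (u v : Option W) : (cone H).dist u v ≤ 2 := by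
  rcases u with _ | w <;> rcases v with _ | w'
  · simp [SimpleGraph.dist_self]
  · exact le_trans (SimpleGraph.dist_le (Walk.cons (cone_adj_none_some w') Walk.nil))
      (by norm_num)
  · exact le_trans (SimpleGraph.dist_le (Walk.cons (cone_adj_some_none w) Walk.nil))
      (by norm_num)
  · have := SimpleGraph.dist_le
      (Walk.cons (cone_adj_some_none (H := H) w) (Walk.cons (cone_adj_none_some w') Walk.nil))
    simpa using this

lemma adj_of_mem_shortest {V : Type*} {G : SimpleGraph V} {x y z : V}
    (p : G.Walk y z) (hlen : p.length = G.dist y z) (hx : x ∈ p.support)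
    (h2 : G.dist y z ≤ 2) (hxy : x ≠ y) (hxz : x ≠ z) : G.Adj y x := by
  classical
  have h1 : G.dist y x ≤ (p.takeUntil x hx).length := SimpleGraph.dist_le _
  have h1' : G.dist x z ≤ (p.dropUntil x hx).length := SimpleGraph.dist_le _
  have hsum : (p.takeUntil x hx).length + (p.dropUntil x hx).length = p.length := by
    rw [← Walk.length_append, p.take_spec hx]
  have hy0 : G.dist y x ≠ 0 :=
    SimpleGraph.dist_ne_zero_iff_ne_and_reachable.mpr ⟨hxy.symm, (p.takeUntil x hx).reachable⟩
  have hz0 : G.dist x z ≠ 0 :=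
    SimpleGraph.dist_ne_zero_iff_ne_and_reachable.mpr ⟨hxz, (p.dropUntil x hx).reachable⟩
  have hd1 : G.dist y x = 1 := by omega
  exact SimpleGraph.dist_eq_one_iff_adj.mp hd1

lemma left_mem_Sset {V : Type*} {G : SimpleGraph V} {x y : V} (hr : G.Reachable y x) :
    x ∈ Sset G x y := by
  obtain ⟨p, hp⟩ := hr.exists_walk_length_eq_dist
  exact Or.inl ⟨p, hp, p.end_mem_support⟩

lemma right_mem_Sset {V : Type*} {G : SimpleGraph V} {x y : V} (hr : G.Reachable x y) :
    y ∈ Sset G x y := by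
  obtain ⟨p, hp⟩ := hr.exists_walk_length_eq_dist
  exact Or.inr ⟨p, hp, p.end_mem_support⟩

lemma Sset_cone_eq {w w' : W} (hne : w ≠ w') (hadj : ¬ H.Adj w w') :
    Sset (cone H) (some w) (some w') = {some w, some w'} := by
  apply Set.Subset.antisymm
  · rintro z (⟨p, hlen, hxp⟩ | ⟨p, hlen, hyp⟩)
    · by_cases hz : some w = z
      · exact Or.inl hz.symm
      · have hadj' := adj_of_mem_shortest p hlen hxp (cone_dist_le_two _ _)
          (by simpa using hne) hz
        exact absurd (cone_adj_some_some.mp hadj') (fun h => hadj h.symm)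
    · by_cases hz : some w' = z
      · exact Or.inr hz.symm
      · have hadj' := adj_of_mem_shortest p hlen hyp (cone_dist_le_two _ _)
          (by simpa using hne.symm) hz
        exact absurd (cone_adj_some_some.mp hadj') hadj
  · rintro z (rfl | rfl)
    · exact left_mem_Sset (cone_reachable _ _)
    · exact right_mem_Sset (cone_reachable _ _)

lemma some_mem_Sset_none {w w' : W} (hr : ¬ H.Reachable w w') :
    (some w' : Option W) ∈ Sset (cone H) none (some w) := by
  have hne : w ≠ w' := by rintro rfl; exact hr (Reachable.refl _)
  have hadj : ¬ H.Adj w w' := fun h => hr h.reachable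
  refine Or.inl ⟨Walk.cons (cone_adj_some_none w) (Walk.cons (cone_adj_none_some w') Walk.nil),
    ?_, by simp⟩
  have h2 : (cone H).dist (some w) (some w') ≤ 2 := cone_dist_le_two _ _
  have h0 : (cone H).dist (some w) (some w') ≠ 0 :=
    SimpleGraph.dist_ne_zero_iff_ne_and_reachable.mpr ⟨by simpa using hne, cone_reachable _ _⟩
  have h1 : (cone H).dist (some w) (some w') ≠ 1 := by
    intro h
    exact hadj (cone_adj_some_some.mp (SimpleGraph.dist_eq_one_iff_adj.mp h))
  have : (cone H).dist (some w) (some w') = 2 := by omega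
  simp [this]

lemma srf_pair_s10 [Fintype W] {g : Option W → ℝ} (hg : IsSRF (cone H) g)
    {w w' : W} (hne : w ≠ w') (hadj : ¬ H.Adj w w') :
    1 ≤ g (some w) + g (some w') := by
  have h := hg.2 (some w) (some w') (by simpa using hne)
  rwa [Sset_cone_eq hne hadj, finsum_mem_pair (by simpa using hne)] at h

lemma le_finsum_mem {V : Type*} [Fintype V] {g : V → ℝ} (hg : ∀ v, 0 ≤ g v) {S : Set V}
    {z1 z2 : V} (h1 : z1 ∈ S) (h2 : z2 ∈ S) (hne : z1 ≠ z2) :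
    g z1 + g z2 ≤ ∑ᶠ z ∈ S, g z := by
  classical
  have hS : S.Finite := Set.toFinite S
  rw [← hS.coe_toFinset, finsum_mem_coe_finset, ← Finset.sum_pair hne]
  apply Finset.sum_le_sum_of_subset_of_nonneg
  · intro i hi
    simp only [Finset.mem_insert, Finset.mem_singleton] at hi
    rcases hi with rfl | rfl
    · exact hS.mem_toFinset.mpr h1
    · exact hS.mem_toFinset.mpr h2
  · exact fun i _ _ => hg i

end Helpers

/-- Let `H` be a disconnected graph of order `m`, and let `a` be the
largest order of a connected component of `H`. Then
`min{ m − a, ⌊m/2⌋ } ≤ sdim_f(K₁ ⊙ H) ≤ m/2`. -/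
theorem sdimf_cone_disconnected_bounds {W : Type*} [Fintype W] (H : SimpleGraph W)
    (hH : ¬ H.Preconnected)
    (a : ℕ) (ha : a = sSup (Set.range fun C : H.ConnectedComponent => C.supp.ncard)) :
    ((min (Fintype.card W - a) (Fintype.card W / 2) : ℕ) : ℝ) ≤ sdimf (cone H) ∧
      sdimf (cone H) ≤ (Fintype.card W : ℝ) / 2 := by
  classical
  set m := Fintype.card W with hm
  rw [SimpleGraph.Preconnected] at hH
  push_neg at hH
  obtain ⟨u0, v0, huv⟩ := hH
  have hsep : ∀ w : W, ∃ w', ¬ H.Reachable w w' := by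
    intro w
    by_contra hcon
    push_neg at hcon
    exact huv ((hcon u0).symm.trans (hcon v0))
  -- the upper bound function
  set gU : Option W → ℝ := fun v => if v = none then 0 else 1/2 with hgU
  have hgU0 : ∀ v, 0 ≤ gU v ∧ gU v ≤ 1 := by
    rintro (_ | w) <;> norm_num [hgU, Option.some_ne_none]
  have hgUsrf : IsSRF (cone H) gU := by
    refine ⟨hgU0, ?_⟩
    intro x y hxy
    have hmain : ∃ z1 z2 : W, z1 ≠ z2 ∧ (some z1 : Option W) ∈ Sset (cone H) x y ∧
        (some z2 : Option W) ∈ Sset (cone H) x y := by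
      match x, y with
      | some w, some w' =>
        exact ⟨w, w', by simpa using hxy, left_mem_Sset (cone_reachable _ _),
          right_mem_Sset (cone_reachable _ _)⟩
      | none, some w =>
        obtain ⟨w', hw'⟩ := hsep w
        have hnew : w ≠ w' := by rintro rfl; exact hw' (Reachable.refl _)
        exact ⟨w, w', hnew, right_mem_Sset (cone_reachable _ _), some_mem_Sset_none hw'⟩
      | some w, none =>
        obtain ⟨w', hw'⟩ := hsep w
        have hnew : w ≠ w' := by rintro rfl; exact hw' (Reachable.refl _)
        rw [Sset_comm]
        exact ⟨w, w', hnew, right_mem_Sset (cone_reachable _ _), some_mem_Sset_none hw'⟩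
      | none, none => exact absurd rfl hxy
    obtain ⟨z1, z2, hnez, h1, h2⟩ := hmain
    have hle := le_finsum_mem (fun v => (hgU0 v).1) h1 h2 (by simpa using hnez)
    have he : gU (some z1) + gU (some z2) = 1 := by norm_num [hgU, Option.some_ne_none]
    linarith
  have hsumU : ∑ᶠ v, gU v = (m : ℝ) / 2 := by
    rw [finsum_eq_sum_of_fintype, Fintype.sum_option]
    simp only [hgU, if_pos rfl, if_neg (Option.some_ne_none _), Finset.sum_const,
      Finset.card_univ, nsmul_eq_mul, ← hm]
    ring
  have hmemU : (m : ℝ) / 2 ∈ {s : ℝ | ∃ g : Option W → ℝ, IsSRF (cone H) g ∧ s = ∑ᶠ v, g v} :=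
    ⟨gU, hgUsrf, hsumU.symm⟩
  have hbdd : BddBelow {s : ℝ | ∃ g : Option W → ℝ, IsSRF (cone H) g ∧ s = ∑ᶠ v, g v} := by
    refine ⟨0, ?_⟩
    rintro s ⟨g, hg, rfl⟩
    rw [finsum_eq_sum_of_fintype]
    exact Finset.sum_nonneg fun i _ => (hg.1 i).1
  constructor
  · -- lower bound
    refine le_csInf ⟨_, hmemU⟩ ?_
    rintro s ⟨g, hg, rfl⟩
    set f : W → ℝ := fun w => g (some w) with hf
    obtain ⟨w0, -, hmin⟩ := Finset.exists_min_image Finset.univ f ⟨u0, Finset.mem_univ u0⟩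
    set μ := f w0 with hμdef
    set S0 : Finset W := (H.connectedComponentMk w0).supp.toFinset with hS0
    have hceq : S0.card = (H.connectedComponentMk w0).supp.ncard :=
      (Set.ncard_eq_toFinset_card' _).symm
    have hbddA : BddAbove (Set.range fun C : H.ConnectedComponent => C.supp.ncard) := by
      refine ⟨m, ?_⟩
      rintro _ ⟨C, rfl⟩
      have := Set.ncard_le_ncard (Set.subset_univ C.supp) Set.finite_univ
      simpa [Set.ncard_univ, Nat.card_eq_fintype_card] using this
    have hca : S0.card ≤ a := by
      rw [hceq, ha]
      exact le_csSup hbddA ⟨H.connectedComponentMk w0, rfl⟩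
    have hcm : S0.card ≤ m := by rw [hm]; exact Finset.card_le_univ S0
    have hout : ∀ w' ∈ S0ᶜ, 1 - μ ≤ f w' := by
      intro w' hw'
      rw [Finset.mem_compl, hS0, Set.mem_toFinset] at hw'
      have hreach : ¬ H.Reachable w0 w' := by
        intro hr
        exact hw' (SimpleGraph.ConnectedComponent.mem_supp_iff _ _ |>.mpr
          (SimpleGraph.ConnectedComponent.sound hr.symm))
      have hnew : w0 ≠ w' := by rintro rfl; exact hreach (Reachable.refl _)
      have hadj : ¬ H.Adj w0 w' := fun h => hreach h.reachable
      have h1 := srf_pair_s10 hg hnew hadj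
      simp only [hμdef, hf]
      linarith
    have hsplit : ∑ᶠ v, g v = g none + (∑ w ∈ S0, f w + ∑ w ∈ S0ᶜ, f w) := by
      rw [finsum_eq_sum_of_fintype, Fintype.sum_option, Finset.sum_add_sum_compl S0 f]
    have hb1 : (S0.card : ℝ) * μ ≤ ∑ w ∈ S0, f w := by
      have := Finset.card_nsmul_le_sum S0 f μ (fun i _ => hmin i (Finset.mem_univ i))
      simpa [nsmul_eq_mul] using this
    have hb2 : ((S0ᶜ : Finset W).card : ℝ) * (1 - μ) ≤ ∑ w ∈ S0ᶜ, f w := by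
      have := Finset.card_nsmul_le_sum S0ᶜ f (1 - μ) hout
      simpa [nsmul_eq_mul] using this
    have hb3 : (m : ℝ) * μ ≤ ∑ w ∈ S0, f w + ∑ w ∈ S0ᶜ, f w := by
      rw [Finset.sum_add_sum_compl S0 f]
      have := Finset.card_nsmul_le_sum Finset.univ f μ (fun i _ => hmin i (Finset.mem_univ i))
      simpa [nsmul_eq_mul, Finset.card_univ, ← hm] using this
    have hcompl : ((S0ᶜ : Finset W).card : ℝ) = (m : ℝ) - (S0.card : ℝ) := by
      rw [Finset.card_compl, ← hm, Nat.cast_sub hcm]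
    have hgnone : 0 ≤ g none := (hg.1 none).1
    have hμ0 : 0 ≤ μ := (hg.1 (some w0)).1
    rw [hsplit]
    by_cases h2c : 2 * S0.card ≤ m
    · have h2c' : 2 * (S0.card : ℝ) ≤ (m : ℝ) := by exact_mod_cast h2c
      have t1 : ((min (m - a) (m / 2) : ℕ) : ℝ) ≤ (m : ℝ) / 2 := by
        refine le_trans (Nat.cast_le.mpr (min_le_right _ _)) ?_
        exact_mod_cast Nat.cast_div_le (α := ℝ)
      by_cases hμh : μ ≤ 1 / 2
      · rw [hcompl] at hb2
        nlinarith [mul_nonneg (by linarith : (0:ℝ) ≤ (m : ℝ) - 2 * (S0.card : ℝ))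
          (by linarith : (0:ℝ) ≤ 1 / 2 - μ)]
      · have hm0 : (0:ℝ) ≤ (m : ℝ) := Nat.cast_nonneg m
        nlinarith
    · have h2c' : (m : ℝ) ≤ 2 * (S0.card : ℝ) := by
        have : m ≤ 2 * S0.card := le_of_not_ge h2c
        exact_mod_cast this
      have t1 : ((min (m - a) (m / 2) : ℕ) : ℝ) ≤ (m : ℝ) - (S0.card : ℝ) := by
        have h1 : (min (m - a) (m / 2)) ≤ m - S0.card :=
          le_trans (min_le_left _ _) (Nat.sub_le_sub_left hca m)
        calc ((min (m - a) (m / 2) : ℕ) : ℝ) ≤ ((m - S0.card : ℕ) : ℝ) := Nat.cast_le.mpr h1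
          _ = (m : ℝ) - (S0.card : ℝ) := Nat.cast_sub hcm
      rw [hcompl] at hb2
      nlinarith [mul_nonneg (by linarith : (0:ℝ) ≤ 2 * (S0.card : ℝ) - (m : ℝ)) hμ0]
  · exact csInf_le hbdd hmemU
end

section
/- For any two connected graphs G and H (each of order at least two), sdim_f(G □ H) ≤ |M(G)| · |M(H)| / 2. -/
open SimpleGraph

section Aux

open SimpleGraph Finset

private lemma exists_adj_aux {V : Type*} [Fintype V] {G : SimpleGraph V}
    (hG : G.Connected) (hn : 2 ≤ Fintype.card V) (u : V) : ∃ w, G.Adj u w := by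
  obtain ⟨v, hv⟩ := Fintype.exists_ne_of_one_lt_card hn u
  obtain ⟨p⟩ := hG u v
  cases p with
  | nil => exact absurd rfl hv
  | cons h q => exact ⟨_, h⟩

private lemma not_maxDistFrom_self {V : Type*} [Fintype V] {G : SimpleGraph V}
    (hG : G.Connected) (hn : 2 ≤ Fintype.card V) (u : V) : ¬ MaxDistFrom G u u := by
  intro h
  obtain ⟨w, hw⟩ := exists_adj_aux hG hn u
  have h1 := h w hw
  rw [SimpleGraph.dist_self, Nat.le_zero] at h1
  exact hw.ne' (hG.dist_eq_zero_iff.mp h1)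

private lemma dist_adj_le_aux {V : Type*} {G : SimpleGraph V} (hG : G.Connected)
    {a b : V} (h : G.Adj a b) (c : V) : G.dist c b ≤ G.dist c a + 1 := by
  have h1 := hG.dist_triangle (u := c) (v := a) (w := b)
  have h2 : G.dist a b = 1 := SimpleGraph.dist_eq_one_iff_adj.mpr h
  omega

private lemma exists_maxDist_extend {V : Type*} [Fintype V] {G : SimpleGraph V}
    (hG : G.Connected) (v u : V) :
    ∃ z, MaxDistFrom G z v ∧ ∃ p : G.Walk v z, p.length = G.dist v z ∧ u ∈ p.support := by
  classical
  set T : Finset V := Finset.univ.filter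
    (fun w => ∃ p : G.Walk v w, p.length = G.dist v w ∧ u ∈ p.support) with hT
  have hu : u ∈ T := by
    obtain ⟨p, hp⟩ := (hG v u).exists_walk_length_eq_dist
    exact Finset.mem_filter.mpr ⟨Finset.mem_univ _, p, hp, p.end_mem_support⟩
  obtain ⟨z, hzT, hzmax⟩ := T.exists_max_image (fun w => G.dist v w) ⟨u, hu⟩
  obtain ⟨-, p, hplen, hup⟩ := Finset.mem_filter.mp hzT
  refine ⟨z, ?_, p, hplen, hup⟩
  intro w hadj
  by_contra hlt
  push_neg at hlt
  have hlt' : G.dist v z < G.dist v w := by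
    rw [SimpleGraph.dist_comm (u := v) (v := z), SimpleGraph.dist_comm (u := v) (v := w)]
    exact hlt
  have h1 : G.dist v w ≤ G.dist v z + 1 := dist_adj_le_aux hG hadj v
  have hw : w ∈ T := by
    refine Finset.mem_filter.mpr ⟨Finset.mem_univ _, p.concat hadj, ?_, ?_⟩
    · rw [SimpleGraph.Walk.length_concat, hplen]; omega
    · rw [SimpleGraph.Walk.support_concat]
      simp [hup]
  have := hzmax w hw
  omega

private lemma mem_Mset_of_maxDistFrom {V : Type*} [Fintype V] {G : SimpleGraph V}
    (hG : G.Connected) (hn : 2 ≤ Fintype.card V) {u v : V}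
    (h : MaxDistFrom G u v) : u ∈ Mset G := by
  classical
  set T : Finset V := Finset.univ.filter (fun w => MaxDistFrom G u w) with hT
  have hv : v ∈ T := Finset.mem_filter.mpr ⟨Finset.mem_univ _, h⟩
  obtain ⟨z, hzT, hmax⟩ := T.exists_max_image (fun w => G.dist u w) ⟨v, hv⟩
  have hz : MaxDistFrom G u z := (Finset.mem_filter.mp hzT).2
  have hvu : v ≠ u := by rintro rfl; exact not_maxDistFrom_self hG hn _ h
  have hdv : 0 < G.dist u v := hG.pos_dist_of_ne (fun h' => hvu h'.symm)
  have hzpos : 0 < G.dist u z := lt_of_lt_of_le hdv (by simpa using hmax v hv)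
  have hzu : u ≠ z := by rintro rfl; rw [SimpleGraph.dist_self] at hzpos; omega
  refine ⟨z, hzu, hz, ?_⟩
  intro w hadj
  by_contra hlt
  push_neg at hlt
  have hlt' : G.dist u z < G.dist u w := by
    rw [SimpleGraph.dist_comm (u := u) (v := z), SimpleGraph.dist_comm (u := u) (v := w)]
    exact hlt
  have hw : MaxDistFrom G u w := by
    intro x hx
    have h1 : G.dist x w ≤ G.dist x z + 1 := dist_adj_le_aux hG hadj x
    have h2 : G.dist x z ≤ G.dist u z := hz x hx
    have h3 : G.dist u z + 1 ≤ G.dist u w := hlt'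
    omega
  have := hmax w (Finset.mem_filter.mpr ⟨Finset.mem_univ _, hw⟩)
  omega

private lemma dist_add_of_mem_support {V : Type*} {G : SimpleGraph V} (hG : G.Connected)
    {x y z : V} (p : G.Walk x z) (hp : p.length = G.dist x z) (hy : y ∈ p.support) :
    G.dist x y + G.dist y z = G.dist x z := by
  obtain ⟨q, r, rfl⟩ := SimpleGraph.Walk.mem_support_iff_exists_append.mp hy
  have h1 := SimpleGraph.dist_le q
  have h2 := SimpleGraph.dist_le r
  have h3 := hG.dist_triangle (u := x) (v := y) (w := z)
  rw [SimpleGraph.Walk.length_append] at hp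
  omega

private lemma boxProd_dist_le_length {V W : Type*} {G : SimpleGraph V} {H : SimpleGraph W}
    (hG : G.Connected) (hH : H.Connected) {x y : V × W} (p : (G.boxProd H).Walk x y) :
    G.dist x.1 y.1 + H.dist x.2 y.2 ≤ p.length := by
  induction p with
  | nil => simp
  | @cons a m b h q ih =>
    rw [SimpleGraph.Walk.length_cons]
    rw [SimpleGraph.boxProd_adj] at h
    rcases h with ⟨h1, h2⟩ | ⟨h1, h2⟩
    · have hd : G.dist a.1 b.1 ≤ G.dist m.1 b.1 + 1 := by
        have := dist_adj_le_aux hG h1.symm b.1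
        rw [SimpleGraph.dist_comm (u := b.1) (v := m.1),
          SimpleGraph.dist_comm (u := b.1) (v := a.1)] at this
        exact this
      rw [h2]
      omega
    · have hd : H.dist a.2 b.2 ≤ H.dist m.2 b.2 + 1 := by
        have := dist_adj_le_aux hH h1.symm b.2
        rw [SimpleGraph.dist_comm (u := b.2) (v := m.2),
          SimpleGraph.dist_comm (u := b.2) (v := a.2)] at this
        exact this
      rw [h2]
      omega

private lemma boxProd_dist {V W : Type*} {G : SimpleGraph V} {H : SimpleGraph W}
    (hG : G.Connected) (hH : H.Connected) (x y : V × W) :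
    (G.boxProd H).dist x y = G.dist x.1 y.1 + H.dist x.2 y.2 := by
  apply le_antisymm
  · obtain ⟨p, hp⟩ := (hG x.1 y.1).exists_walk_length_eq_dist
    obtain ⟨q, hq⟩ := (hH x.2 y.2).exists_walk_length_eq_dist
    have hle := SimpleGraph.dist_le ((p.boxProdLeft H x.2).append (q.boxProdRight G y.1))
    rw [SimpleGraph.Walk.length_append] at hle
    have hl1 : (p.boxProdLeft H x.2).length = p.length := SimpleGraph.Walk.length_map ..
    have hl2 : (q.boxProdRight G y.1).length = q.length := SimpleGraph.Walk.length_map ..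
    rw [hl1, hl2] at hle
    simpa [SimpleGraph.Walk.boxProdLeft, SimpleGraph.Walk.boxProdRight,
      SimpleGraph.Walk.length_map, hp, hq] using hle
  · obtain ⟨p, hp⟩ := ((hG.boxProd hH) x y).exists_walk_length_eq_dist
    rw [← hp]
    exact boxProd_dist_le_length hG hH p

private lemma maxDistFrom_boxProd {V W : Type*} {G : SimpleGraph V} {H : SimpleGraph W}
    (hG : G.Connected) (hH : H.Connected) {a b : V × W}
    (hab : MaxDistFrom (G.boxProd H) a b) :
    MaxDistFrom G a.1 b.1 ∧ MaxDistFrom H a.2 b.2 := by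
  constructor
  · intro w hw
    have hadj : (G.boxProd H).Adj a (w, a.2) := by
      rw [SimpleGraph.boxProd_adj]; exact Or.inl ⟨hw, rfl⟩
    have := hab (w, a.2) hadj
    rw [boxProd_dist hG hH, boxProd_dist hG hH] at this
    simp only at this
    omega
  · intro w hw
    have hadj : (G.boxProd H).Adj a (a.1, w) := by
      rw [SimpleGraph.boxProd_adj]; exact Or.inr ⟨hw, rfl⟩
    have := hab (a.1, w) hadj
    rw [boxProd_dist hG hH, boxProd_dist hG hH] at this
    simp only at this
    omega

private lemma MMD_boxProd_mem {V W : Type*} [Fintype V] [Fintype W]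
    {G : SimpleGraph V} {H : SimpleGraph W}
    (hG : G.Connected) (hH : H.Connected)
    (hn : 2 ≤ Fintype.card V) (hm : 2 ≤ Fintype.card W)
    {x y : V × W} (h : MMD (G.boxProd H) x y) : x.1 ∈ Mset G ∧ x.2 ∈ Mset H := by
  obtain ⟨hne, h1, h2⟩ := h
  obtain ⟨h11, h12⟩ := maxDistFrom_boxProd hG hH h1
  obtain ⟨h21, h22⟩ := maxDistFrom_boxProd hG hH h2
  constructor
  · have hne1 : x.1 ≠ y.1 := by
      rintro he
      rw [he] at h11
      exact not_maxDistFrom_self hG hn y.1 h11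
    exact ⟨y.1, hne1, h11, h21⟩
  · have hne2 : x.2 ≠ y.2 := by
      rintro he
      rw [he] at h12
      exact not_maxDistFrom_self hH hm y.2 h12
    exact ⟨y.2, hne2, h12, h22⟩

end Aux

/-- For any two connected graphs `G` and `H` of order at least two,
`sdim_f(G □ H) ≤ |M(G)|·|M(H)|/2`. -/
theorem sdimf_boxProd_le_half_Msets {V W : Type*} [Fintype V] [Fintype W]
    (G : SimpleGraph V) (H : SimpleGraph W)
    (hG : G.Connected) (hH : H.Connected)
    (hn : 2 ≤ Fintype.card V) (hm : 2 ≤ Fintype.card W) :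
    sdimf (G.boxProd H) ≤ ((Mset G).ncard : ℝ) * ((Mset H).ncard : ℝ) / 2 := by
  classical
  set K := G.boxProd H with hK'
  have hK : K.Connected := hG.boxProd hH
  have hcard : 2 ≤ Fintype.card (V × W) := by
    rw [Fintype.card_prod]; nlinarith
  set s : Set (V × W) := (Mset G) ×ˢ (Mset H) with hs'
  set g : V × W → ℝ := fun p => if p ∈ s then 1/2 else 0 with hg
  have hgnn : ∀ p, 0 ≤ g p := by
    intro p; rw [hg]; dsimp only; split <;> norm_num
  have hgle : ∀ p, g p ≤ 1 := by
    intro p; rw [hg]; dsimp only; split <;> norm_num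
  have key : ∀ x y : V × W, x ≠ y → (1 : ℝ) ≤ ∑ᶠ z ∈ Sset K x y, g z := by
    intro x y hxy
    obtain ⟨z, hz, p, hp, hyp⟩ := exists_maxDist_extend hK x y
    obtain ⟨z', hz', p', hp', hxp'⟩ := exists_maxDist_extend hK y x
    have hzs : z ∈ s := by
      obtain ⟨w, hw⟩ := mem_Mset_of_maxDistFrom hK hcard hz
      exact MMD_boxProd_mem hG hH hn hm hw
    have hz's : z' ∈ s := by
      obtain ⟨w, hw⟩ := mem_Mset_of_maxDistFrom hK hcard hz'
      exact MMD_boxProd_mem hG hH hn hm hw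
    have hzS : z ∈ Sset K x y := Or.inr ⟨p, hp, hyp⟩
    have hz'S : z' ∈ Sset K x y := Or.inl ⟨p', hp', hxp'⟩
    have hne : z ≠ z' := by
      rintro rfl
      have e1 := dist_add_of_mem_support hK p hp hyp
      have e2 := dist_add_of_mem_support hK p' hp' hxp'
      have hc1 : K.dist x y = K.dist y x := SimpleGraph.dist_comm
      have hc2 : K.dist x z = K.dist z x := SimpleGraph.dist_comm
      have hc3 : K.dist y z = K.dist z y := SimpleGraph.dist_comm
      have e3 : K.dist x y = 0 := by omega
      exact hxy (hK.dist_eq_zero_iff.mp e3)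
    have hfin : (Sset K x y).Finite := Set.toFinite _
    rw [finsum_mem_eq_finite_toFinset_sum _ hfin]
    have hsub : ({z, z'} : Finset (V × W)) ⊆ hfin.toFinset := by
      intro t ht
      rw [Finset.mem_insert, Finset.mem_singleton] at ht
      rcases ht with rfl | rfl <;> rw [Set.Finite.mem_toFinset] <;> assumption
    calc (1 : ℝ) = ∑ t ∈ ({z, z'} : Finset (V × W)), g t := by
          rw [Finset.sum_pair hne, hg]; simp only [hzs, hz's, if_pos]; norm_num
      _ ≤ _ := Finset.sum_le_sum_of_subset_of_nonneg hsub (fun t _ _ => hgnn t)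
  have hSRF : IsSRF K g := ⟨fun p => ⟨hgnn p, hgle p⟩, key⟩
  have hbdd : BddBelow {t : ℝ | ∃ g' : V × W → ℝ, IsSRF K g' ∧ t = ∑ᶠ v, g' v} := by
    refine ⟨0, ?_⟩
    rintro t ⟨g', hg', rfl⟩
    exact finsum_nonneg fun v => (hg'.1 v).1
  have hle : sdimf K ≤ ∑ᶠ p, g p := csInf_le hbdd ⟨g, hSRF, rfl⟩
  have hfilter : Finset.univ.filter (fun p => p ∈ s) = s.toFinset := by
    ext t; simp
  have hsum : ∑ᶠ p : V × W, g p = (s.ncard : ℝ) * (1/2) := by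
    rw [finsum_eq_sum_of_fintype, hg]
    dsimp only
    rw [← Finset.sum_filter, Finset.sum_const, hfilter, ← Set.ncard_eq_toFinset_card']
    simp [nsmul_eq_mul]
  have hncard : s.ncard = (Mset G).ncard * (Mset H).ncard := by
    have h1 : s.ncard = Nat.card s := (Nat.card_coe_set_eq s).symm
    rw [h1, Nat.card_congr (Equiv.Set.prod _ _), Nat.card_prod,
      Nat.card_coe_set_eq, Nat.card_coe_set_eq]
  rw [hsum, hncard] at hle
  calc sdimf K ≤ ((Mset G).ncard * (Mset H).ncard : ℕ) * (1/2 : ℝ) := hle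
    _ = ((Mset G).ncard : ℝ) * ((Mset H).ncard : ℝ) / 2 := by push_cast; ring
end
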